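/- arXiv:2203.05959 — 5 statements merged into one kernel-verified Lean document; each statement's English description precedes it below -/
import Mathlib

section
/- Let f be a real nonnegative trigonometric polynomial of degree less than n with â₀(f) > 0, let A = C_n(f) and let D_A = â₀(f)·I_n be its diagonal part. If 0 < α < 2â₀(f)/‖f‖_∞, then the circulant matrix 2αD_A^{−1} − α²D_A^{−1}AD_A^{−1} is Hermitian positive definite. -/
open Matrix Filter Set
open scoped Real Topology ComplexConjugate ComplexOrder

noncomputable section

/-- The `j`-th Fourier coefficient of `f`. -/
def fcoeff (f : ℝ → ℂ) (j : ℤ) : ℂ :=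
  (1 / (2 * Real.pi)) * ∫ θ in (-Real.pi)..Real.pi, f θ * Complex.exp (-Complex.I * (j : ℂ) * (θ : ℂ))

/-- The matrix `Z_n^j`, whose `(i,l)` entry is `1` if `i - l ≡ j (mod n)` and `0` otherwise. -/
def Zmat (n : ℕ) (j : ℤ) : Matrix (Fin n) (Fin n) ℂ :=
  Matrix.of fun i l => if ((i : ℤ) - (l : ℤ) - j) % (n : ℤ) = 0 then 1 else 0

/-- The circulant matrix `C_n(f)` generated by `f`. -/
def circMat (n : ℕ) (f : ℝ → ℂ) : Matrix (Fin n) (Fin n) ℂ :=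
  ∑ j ∈ Finset.Ioo (-(n : ℤ)) (n : ℤ), fcoeff f j • Zmat n j

/-- The down-sampling matrix `K_n` (with `k = n/2` rows). -/
def Kmat (k n : ℕ) : Matrix (Fin k) (Fin n) ℂ :=
  Matrix.of fun i j => if (j : ℕ) = 2 * (i : ℕ) then 1 else 0

/-- `f` is a trigonometric polynomial of degree (strictly) less than `n`. -/
def IsTrigPolyDegLT (n : ℕ) (f : ℝ → ℂ) : Prop :=
  ∃ c : ℤ → ℂ, ∀ θ : ℝ,
    f θ = ∑ j ∈ Finset.Ioo (-(n : ℤ)) (n : ℤ), c j * Complex.exp (Complex.I * (j : ℂ) * (θ : ℂ))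

/-- `f` is a trigonometric polynomial of degree at most `z`. -/
def IsTrigPolyDeg (z : ℕ) (f : ℝ → ℂ) : Prop :=
  ∃ c : ℤ → ℂ, ∀ θ : ℝ,
    f θ = ∑ j ∈ Finset.Icc (-(z : ℤ)) (z : ℤ), c j * Complex.exp (Complex.I * (j : ℂ) * (θ : ℂ))

/-- The zeroth Fourier coefficient of a real function. -/
def a0 (f : ℝ → ℝ) : ℝ := (1 / (2 * Real.pi)) * ∫ θ in (-Real.pi)..Real.pi, f θ

/-- The supremum norm of a real function on `[0, 2π)`. -/
def supnorm (f : ℝ → ℝ) : ℝ := sSup ((fun θ => |f θ|) '' Set.Ico 0 (2 * Real.pi))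

/-- The two-grid iteration matrix with one step of damped Jacobi post-smoothing. -/
def TGMmat {N K : Type*} [Fintype N] [DecidableEq N] [Fintype K] [DecidableEq K]
    (X : Matrix N N ℂ) (P : Matrix N K ℂ) (ω : ℝ) : Matrix N N ℂ :=
  (1 - (ω : ℂ) • ((Matrix.diagonal fun i => X i i)⁻¹ * X)) *
    (1 - P * (Pᴴ * X * P)⁻¹ * Pᴴ * X)

/-- The coarse symbol operator `ψ`. -/
def psiC (g : ℝ → ℂ) : ℝ → ℂ := fun θ => (1 / 2) * (g (θ / 2) + g (θ / 2 + Real.pi))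


/-- Auxiliary lemmas -/
lemma exp_int_integral (m : ℤ) :
    ∫ θ : ℝ in (-Real.pi)..Real.pi, Complex.exp (Complex.I * (m : ℂ) * (θ : ℂ)) =
      if m = 0 then (2 * Real.pi : ℂ) else 0 := by
  rcases eq_or_ne m 0 with h | h
  · simp [h, two_mul]
  · have hm : (m : ℂ) ≠ 0 := Int.cast_ne_zero.2 h
    have hc : (Complex.I * (m : ℂ)) ≠ 0 := mul_ne_zero Complex.I_ne_zero hm
    rw [if_neg h, integral_exp_mul_complex hc]
    have h1 : Complex.exp (Complex.I * (m:ℂ) * (Real.pi:ℂ)) = (-1 : ℂ) ^ m := by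
      rw [show Complex.I * (m:ℂ) * (Real.pi:ℂ) = (m:ℂ) * ((Real.pi:ℂ) * Complex.I) by ring,
        Complex.exp_int_mul, Complex.exp_pi_mul_I]
    have h2 : Complex.exp (Complex.I * (m:ℂ) * ((-Real.pi : ℝ):ℂ)) = (-1 : ℂ) ^ (-m) := by
      rw [show (Complex.I * (m:ℂ) * ((-Real.pi:ℝ):ℂ)) = ((-m : ℤ) : ℂ) * ((Real.pi:ℂ) * Complex.I) by
        push_cast; ring, Complex.exp_int_mul, Complex.exp_pi_mul_I]
    rw [h1, h2]
    have : (-1 : ℂ) ^ (-m) = (-1 : ℂ) ^ m := by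
      rcases Int.even_or_odd m with he | ho
      · rw [Even.neg_one_zpow he.neg, Even.neg_one_zpow he]
      · rw [Odd.neg_one_zpow ho.neg, Odd.neg_one_zpow ho]
    rw [this, sub_self, zero_div]


lemma sum_root (n : ℕ) (hn : 0 < n) (m : ℤ) :
    ∑ k : Fin n, Complex.exp (2 * Real.pi * Complex.I * (m : ℂ) * (k : ℂ) / (n : ℂ)) =
      if (n : ℤ) ∣ m then (n : ℂ) else 0 := by
  have hne : (n : ℂ) ≠ 0 := Nat.cast_ne_zero.2 hn.ne'
  set z : ℂ := Complex.exp (2 * Real.pi * Complex.I * (m : ℂ) / (n : ℂ)) with hz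
  have hzk : ∀ k : Fin n, Complex.exp (2 * Real.pi * Complex.I * (m : ℂ) * (k : ℂ) / (n : ℂ)) = z ^ (k : ℕ) := by
    intro k
    rw [hz, ← Complex.exp_nat_mul]
    congr 1; ring
  rw [Finset.sum_congr rfl (fun k _ => hzk k), Fin.sum_univ_eq_sum_range]
  have hI : (2 : ℂ) * Real.pi * Complex.I ≠ 0 := by
    simp [Real.pi_ne_zero, Complex.I_ne_zero]
  have hz1 : z = 1 ↔ (n : ℤ) ∣ m := by
    rw [hz, Complex.exp_eq_one_iff]
    constructor
    · rintro ⟨j, hj⟩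
      refine ⟨j, ?_⟩
      have : (m : ℂ) = ((n : ℤ) : ℂ) * (j : ℂ) := by
        field_simp at hj
        -- hj : 2 * π * I * m = j * (2 * π * I) * n  (roughly)
        have h2 : (2 : ℂ) * Real.pi * Complex.I * (m : ℂ) =
            (2 : ℂ) * Real.pi * Complex.I * (((n:ℤ):ℂ) * (j:ℂ)) := by
          push_cast at hj ⊢
          linear_combination (2 * (Real.pi:ℂ) * Complex.I) * hj
        exact mul_left_cancel₀ hI h2
      exact_mod_cast this
    · rintro ⟨j, hj⟩
      exact ⟨j, by rw [hj]; push_cast; field_simp⟩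
  rcases eq_or_ne z 1 with h1 | h1
  · rw [if_pos (hz1.1 h1)]
    simp [h1]
  · rw [if_neg (fun hd => h1 (hz1.2 hd))]
    rw [geom_sum_eq h1]
    have : z ^ n = 1 := by
      rw [hz, ← Complex.exp_nat_mul, Complex.exp_eq_one_iff]
      exact ⟨m, by field_simp⟩
    rw [this, sub_self, zero_div]


lemma fcoeff_eq (s : Finset ℤ) (f : ℝ → ℂ) (c : ℤ → ℂ)
    (hc : ∀ θ : ℝ, f θ = ∑ j ∈ s, c j * Complex.exp (Complex.I * (j : ℂ) * (θ : ℂ)))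
    (l : ℤ) (hl : l ∈ s) : fcoeff f l = c l := by
  have hint : ∀ j : ℤ, IntervalIntegrable
      (fun θ : ℝ => c j * Complex.exp (Complex.I * (j : ℂ) * (θ : ℂ)) *
        Complex.exp (-Complex.I * (l : ℂ) * (θ : ℂ))) MeasureTheory.volume (-Real.pi) Real.pi := by
    intro j
    apply Continuous.intervalIntegrable
    fun_prop
  have h1 : ∀ θ : ℝ, f θ * Complex.exp (-Complex.I * (l : ℂ) * (θ : ℂ)) =
      ∑ j ∈ s, c j * Complex.exp (Complex.I * (j : ℂ) * (θ : ℂ)) *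
        Complex.exp (-Complex.I * (l : ℂ) * (θ : ℂ)) := by
    intro θ; rw [hc θ, Finset.sum_mul]
  unfold fcoeff
  rw [intervalIntegral.integral_congr (g := fun θ : ℝ => ∑ j ∈ s,
      c j * Complex.exp (Complex.I * (j : ℂ) * (θ : ℂ)) *
        Complex.exp (-Complex.I * (l : ℂ) * (θ : ℂ))) (fun θ _ => h1 θ),
    intervalIntegral.integral_finset_sum (fun j _ => hint j)]
  have h2 : ∀ j : ℤ, (∫ θ : ℝ in (-Real.pi)..Real.pi,
      c j * Complex.exp (Complex.I * (j : ℂ) * (θ : ℂ)) *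
        Complex.exp (-Complex.I * (l : ℂ) * (θ : ℂ)))
      = c j * (if j - l = 0 then (2 * Real.pi : ℂ) else 0) := by
    intro j
    rw [← exp_int_integral (j - l), ← intervalIntegral.integral_const_mul]
    apply intervalIntegral.integral_congr
    intro θ _
    show c j * Complex.exp (Complex.I * (j : ℂ) * (θ : ℂ)) *
        Complex.exp (-Complex.I * (l : ℂ) * (θ : ℂ)) =
      c j * Complex.exp (Complex.I * ((j - l : ℤ) : ℂ) * (θ : ℂ))
    rw [mul_assoc, ← Complex.exp_add]
    congr 2
    push_cast
    ring
  rw [Finset.sum_congr rfl (fun j _ => h2 j)]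
  rw [Finset.sum_eq_single l]
  · rw [if_pos (sub_self l)]
    have hpi : ((Real.pi : ℂ)) ≠ 0 := Complex.ofReal_ne_zero.2 Real.pi_ne_zero
    field_simp
  · intro j hj hjl
    rw [if_neg (by omega), mul_zero]
  · intro h; exact absurd hl h


def wvec (n : ℕ) (k : Fin n) : Fin n → ℂ :=
  fun i => Complex.exp (-(2 * Real.pi * Complex.I * (k : ℂ) * (i : ℂ)) / (n : ℂ))

lemma wvec_mul (n : ℕ) (k i l : Fin n) :
    wvec n k i * star (wvec n k) l =
      Complex.exp (2 * Real.pi * Complex.I * (((l : ℤ) - (i : ℤ) : ℤ) : ℂ) * (k : ℂ) / (n : ℂ)) := by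
  unfold wvec
  rw [Pi.star_apply, Complex.star_def, ← Complex.exp_conj, ← Complex.exp_add]
  congr 1
  rw [map_div₀]
  push_cast
  simp [_root_.map_mul, Complex.conj_I, Complex.conj_ofReal, map_neg, map_ofNat]
  ring

lemma one_eq (n : ℕ) (hn : 0 < n) :
    (n : ℂ) • (1 : Matrix (Fin n) (Fin n) ℂ) =
      ∑ k : Fin n, vecMulVec (wvec n k) (star (wvec n k)) := by
  ext i l
  rw [Matrix.sum_apply]
  simp only [Matrix.vecMulVec_apply]
  rw [Finset.sum_congr rfl (fun k _ => wvec_mul n k i l), sum_root n hn _]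
  have hil : ((n : ℤ) ∣ ((l : ℤ) - (i : ℤ))) ↔ i = l := by
    constructor
    · intro h
      have h1 : ((l : ℤ) - (i : ℤ)) = 0 := by
        rcases h with ⟨t, ht⟩
        have hn' : (0 : ℤ) < n := Int.natCast_pos.2 hn
        have hl' : (l : ℤ) < n := Int.ofNat_lt.2 l.isLt
        have hi' : (i : ℤ) < n := Int.ofNat_lt.2 i.isLt
        have hl0 : (0 : ℤ) ≤ (l : ℤ) := Int.ofNat_nonneg _
        have hi0 : (0 : ℤ) ≤ (i : ℤ) := Int.ofNat_nonneg _
        have hlt : (n : ℤ) * t < n * 1 := by rw [← ht, mul_one]; linarith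
        have hgt : (n : ℤ) * (-1) < n * t := by rw [← ht]; linarith
        have t1 : t < 1 := lt_of_mul_lt_mul_left hlt hn'.le
        have t2 : -1 < t := lt_of_mul_lt_mul_left hgt hn'.le
        have : t = 0 := by omega
        rw [this, mul_zero] at ht
        exact ht
      have : (i : ℕ) = (l : ℕ) := by omega
      exact Fin.ext this
    · intro h; rw [h]; simp
  by_cases h : i = l
  · rw [if_pos (hil.2 h)]
    subst h
    simp [Matrix.smul_apply]
  · rw [if_neg (fun hd => h (hil.1 hd)), Matrix.smul_apply, Matrix.one_apply_ne h, smul_zero]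


lemma circ_eq (n : ℕ) (hn : 0 < n) (g : ℝ → ℂ) (c : ℤ → ℂ)
    (hc : ∀ θ : ℝ, g θ = ∑ j ∈ Finset.Ioo (-(n : ℤ)) (n : ℤ),
      c j * Complex.exp (Complex.I * (j : ℂ) * (θ : ℂ))) :
    (n : ℂ) • circMat n g =
      ∑ k : Fin n, g (2 * Real.pi * (k : ℝ) / (n : ℝ)) •
        vecMulVec (wvec n k) (star (wvec n k)) := by
  have hnR : ((n : ℝ)) ≠ 0 := Nat.cast_ne_zero.2 hn.ne'
  ext i l
  rw [Matrix.sum_apply]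
  have hterm : ∀ k : Fin n, (g (2 * Real.pi * (k : ℝ) / (n : ℝ)) •
      vecMulVec (wvec n k) (star (wvec n k))) i l =
      ∑ j ∈ Finset.Ioo (-(n : ℤ)) (n : ℤ),
        c j * Complex.exp (2 * Real.pi * Complex.I *
          ((j + (l : ℤ) - (i : ℤ) : ℤ) : ℂ) * (k : ℂ) / (n : ℂ)) := by
    intro k
    rw [Matrix.smul_apply, Matrix.vecMulVec_apply, smul_eq_mul, wvec_mul, hc _, Finset.sum_mul]
    refine Finset.sum_congr rfl fun j _ => ?_
    rw [mul_assoc, ← Complex.exp_add]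
    congr 2
    push_cast [hnR]
    field_simp
    ring
  rw [Finset.sum_congr rfl fun k _ => hterm k, Finset.sum_comm]
  have hinner : ∀ j : ℤ, (∑ k : Fin n, c j * Complex.exp (2 * Real.pi * Complex.I *
      ((j + (l : ℤ) - (i : ℤ) : ℤ) : ℂ) * (k : ℂ) / (n : ℂ))) =
      c j * (if (n : ℤ) ∣ (j + (l : ℤ) - (i : ℤ)) then (n : ℂ) else 0) := by
    intro j
    rw [← Finset.mul_sum, sum_root n hn _]
  rw [Finset.sum_congr rfl fun j _ => hinner j]
  rw [Matrix.smul_apply, circMat, Matrix.sum_apply, smul_eq_mul, Finset.mul_sum]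
  refine Finset.sum_congr rfl fun j hj => ?_
  rw [Matrix.smul_apply, fcoeff_eq _ g c hc j hj, Zmat, Matrix.of_apply]
  have hiff : (((i : ℤ) - (l : ℤ) - j) % (n : ℤ) = 0) ↔ ((n : ℤ) ∣ (j + (l : ℤ) - (i : ℤ))) := by
    rw [← Int.dvd_iff_emod_eq_zero, ← dvd_neg]
    constructor <;> intro h <;> [skip; skip] <;>
      · convert h using 1 <;> [rfl; ring]
  by_cases h : ((i : ℤ) - (l : ℤ) - j) % (n : ℤ) = 0
  · rw [if_pos h, if_pos (hiff.1 h)]; rw [smul_eq_mul]; ring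
  · rw [if_neg h, if_neg (fun hd => h (hiff.2 hd))]; rw [smul_zero, mul_zero, mul_zero]


lemma vecMulVec_mulVec' {n : Type*} [Fintype n] (a b x : n → ℂ) :
    Matrix.vecMulVec a b *ᵥ x = (b ⬝ᵥ x) • a := by
  ext i
  simp [Matrix.mulVec, Matrix.vecMulVec_apply, dotProduct, Finset.mul_sum, mul_assoc,
    mul_comm, mul_left_comm]

lemma sum_mulVec' {m N : Type*} [Fintype m] [Fintype N] (A : m → Matrix N N ℂ) (x : N → ℂ) :
    (∑ k, A k) *ᵥ x = ∑ k, A k *ᵥ x := by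
  ext i
  simp only [Matrix.mulVec, dotProduct, Matrix.sum_apply, Finset.sum_apply,
    Finset.sum_mul]
  exact Finset.sum_comm

lemma dotProduct_sum' {m N : Type*} [Fintype m] [Fintype N] (v : N → ℂ) (w : m → N → ℂ) :
    v ⬝ᵥ (∑ k, w k) = ∑ k, v ⬝ᵥ w k := by
  simp only [dotProduct, Finset.sum_apply, Finset.mul_sum]
  exact Finset.sum_comm

lemma posdef_sum {m : Type*} {N : Type*} [Fintype m] [Fintype N] [DecidableEq N]
    (u : m → N → ℂ) (r : m → ℝ) (hr : ∀ k, 0 < r k)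
    (hspan : ∀ x : N → ℂ, x ≠ 0 → ∃ k, star (u k) ⬝ᵥ x ≠ 0) :
    (∑ k, (r k : ℂ) • Matrix.vecMulVec (u k) (star (u k))).PosDef := by
  refine Matrix.PosDef.of_dotProduct_mulVec_pos ?_ ?_
  · show _ = _
    ext i l
    simp only [Matrix.conjTranspose_apply, Matrix.sum_apply, Matrix.smul_apply,
      Matrix.vecMulVec_apply, Pi.star_apply, smul_eq_mul, star_sum, star_mul',
      Complex.star_def, Complex.conj_ofReal, _root_.map_mul, Complex.conj_conj]
    exact Finset.sum_congr rfl fun k _ => by ring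
  · intro x hx
    have hmv : (∑ k, (r k : ℂ) • Matrix.vecMulVec (u k) (star (u k))) *ᵥ x =
        ∑ k, ((r k : ℂ) * (star (u k) ⬝ᵥ x)) • u k := by
      rw [sum_mulVec']
      refine Finset.sum_congr rfl fun k _ => ?_
      rw [Matrix.smul_mulVec, vecMulVec_mulVec', smul_smul]
    rw [hmv, dotProduct_sum']
    have hterm : ∀ k, star x ⬝ᵥ (((r k : ℂ) * (star (u k) ⬝ᵥ x)) • u k) =
        ((r k * Complex.normSq (star (u k) ⬝ᵥ x) : ℝ) : ℂ) := by
      intro k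
      have h1 : star x ⬝ᵥ u k = star (star (u k) ⬝ᵥ x) := by
        rw [Matrix.star_dotProduct]
      rw [dotProduct_smul, h1, smul_eq_mul, Complex.star_def, mul_assoc,
        Complex.mul_conj]
      push_cast
      ring
    rw [Finset.sum_congr rfl fun k _ => hterm k, ← Complex.ofReal_sum]
    rw [show (0 : ℂ) = ((0 : ℝ) : ℂ) by norm_num, Complex.real_lt_real]
    obtain ⟨k0, hk0⟩ := hspan x hx
    apply Finset.sum_pos' (fun k _ => mul_nonneg (hr k).le (Complex.normSq_nonneg _))
    exact ⟨k0, Finset.mem_univ _, mul_pos (hr k0) (Complex.normSq_pos.2 hk0)⟩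


/-- Lemma on positivity of `2αD_A⁻¹ − α²D_A⁻¹AD_A⁻¹`. -/
theorem stmt3 (n : ℕ) (f : ℝ → ℝ)
    (hf : IsTrigPolyDegLT n (fun θ => (f θ : ℂ)))
    (hfnn : ∀ θ : ℝ, 0 ≤ f θ) (ha0 : 0 < a0 f)
    (α : ℝ) (hα0 : 0 < α) (hα : α < 2 * a0 f / supnorm f) :
    (((2 * α : ℝ) : ℂ) • (((a0 f : ℝ) : ℂ)⁻¹ • (1 : Matrix (Fin n) (Fin n) ℂ)) -
      ((α ^ 2 : ℝ) : ℂ) • ((((a0 f : ℝ) : ℂ)⁻¹ • (1 : Matrix (Fin n) (Fin n) ℂ)) *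
        circMat n (fun θ => (f θ : ℂ)) *
        (((a0 f : ℝ) : ℂ)⁻¹ • (1 : Matrix (Fin n) (Fin n) ℂ)))).PosDef := by
  rcases Nat.eq_zero_or_pos n with rfl | hn
  · constructor
    · show _ = _
      ext i l
      exact i.elim0
    · intro x hx
      exfalso
      exact hx (Finsupp.ext fun i => i.elim0)
  obtain ⟨c, hc⟩ := hf
  have hnC : ((n : ℂ)) ≠ 0 := Nat.cast_ne_zero.2 hn.ne'
  have hnR : ((n : ℝ)) ≠ 0 := Nat.cast_ne_zero.2 hn.ne'
  have ha0C : (((a0 f : ℝ) : ℂ)) ≠ 0 := Complex.ofReal_ne_zero.2 ha0.ne'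
  -- continuity of f
  have hfc : Continuous f := by
    have h1 : Continuous (fun θ : ℝ => ∑ j ∈ Finset.Ioo (-(n : ℤ)) (n : ℤ),
        c j * Complex.exp (Complex.I * (j : ℂ) * (θ : ℂ))) := by
      apply continuous_finset_sum
      intro j _
      fun_prop
    have h2 : f = fun θ : ℝ => (∑ j ∈ Finset.Ioo (-(n : ℤ)) (n : ℤ),
        c j * Complex.exp (Complex.I * (j : ℂ) * (θ : ℂ))).re := by
      funext θ
      rw [← hc θ, Complex.ofReal_re]
    rw [h2]
    exact Complex.continuous_re.comp h1
  have hbdd : BddAbove ((fun θ => |f θ|) '' Set.Ico 0 (2 * Real.pi)) := by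
    apply BddAbove.mono (Set.image_mono Set.Ico_subset_Icc_self)
    exact (isCompact_Icc.image hfc.abs).bddAbove
  have hfle : ∀ θ ∈ Set.Ico (0 : ℝ) (2 * Real.pi), f θ ≤ supnorm f := fun θ hθ =>
    le_trans (le_abs_self _) (le_csSup hbdd ⟨θ, hθ, rfl⟩)
  have hs : 0 < supnorm f := by
    rcases lt_trichotomy (supnorm f) 0 with h | h | h
    · have : 2 * a0 f / supnorm f < 0 := div_neg_of_pos_of_neg (by linarith) h
      linarith
    · rw [h, div_zero] at hα; linarith
    · exact h
  have hαs : α * supnorm f < 2 * a0 f := (lt_div_iff₀ hs).1 hα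
  set r : Fin n → ℝ := fun k =>
    (2 * α / a0 f - α ^ 2 / (a0 f) ^ 2 * f (2 * Real.pi * (k : ℝ) / (n : ℝ))) / n with hr_def
  have htk : ∀ k : Fin n, (2 * Real.pi * (k : ℝ) / (n : ℝ)) ∈ Set.Ico (0 : ℝ) (2 * Real.pi) := by
    intro k
    have hkn : ((k : ℕ) : ℝ) < (n : ℝ) := Nat.cast_lt.2 k.isLt
    have hk0 : (0 : ℝ) ≤ ((k : ℕ) : ℝ) := Nat.cast_nonneg _
    have hnp : (0 : ℝ) < n := Nat.cast_pos.2 hn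
    constructor
    · positivity
    · rw [div_lt_iff₀ hnp]
      nlinarith [Real.pi_pos]
  have hr : ∀ k, 0 < r k := by
    intro k
    have hfk0 : 0 ≤ f (2 * Real.pi * (k : ℝ) / (n : ℝ)) := hfnn _
    have hfks : f (2 * Real.pi * (k : ℝ) / (n : ℝ)) ≤ supnorm f := hfle _ (htk k)
    have hnp : (0 : ℝ) < n := Nat.cast_pos.2 hn
    apply div_pos _ hnp
    have heq : 2 * α / a0 f - α ^ 2 / (a0 f) ^ 2 * f (2 * Real.pi * (k : ℝ) / (n : ℝ)) =
        (α * (2 * a0 f - α * f (2 * Real.pi * (k : ℝ) / (n : ℝ)))) / (a0 f) ^ 2 := by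
      field_simp
    rw [heq]
    apply div_pos _ (pow_pos ha0 2)
    apply mul_pos hα0
    nlinarith [mul_le_mul_of_nonneg_left hfks hα0.le]
  -- identities
  have h1' : (1 : Matrix (Fin n) (Fin n) ℂ) =
      (n : ℂ)⁻¹ • ∑ k : Fin n, vecMulVec (wvec n k) (star (wvec n k)) := by
    rw [← one_eq n hn, inv_smul_smul₀ hnC]
  have hC : circMat n (fun θ => (f θ : ℂ)) =
      (n : ℂ)⁻¹ • ∑ k : Fin n, ((f (2 * Real.pi * (k : ℝ) / (n : ℝ)) : ℝ) : ℂ) •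
        vecMulVec (wvec n k) (star (wvec n k)) := by
    rw [← circ_eq n hn _ c hc, inv_smul_smul₀ hnC]
  have hM : (((2 * α : ℝ) : ℂ) • (((a0 f : ℝ) : ℂ)⁻¹ • (1 : Matrix (Fin n) (Fin n) ℂ)) -
      ((α ^ 2 : ℝ) : ℂ) • ((((a0 f : ℝ) : ℂ)⁻¹ • (1 : Matrix (Fin n) (Fin n) ℂ)) *
        circMat n (fun θ => (f θ : ℂ)) *
        (((a0 f : ℝ) : ℂ)⁻¹ • (1 : Matrix (Fin n) (Fin n) ℂ)))) =
      ∑ k : Fin n, ((r k : ℝ) : ℂ) • vecMulVec (wvec n k) (star (wvec n k)) := by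
    have hprod : ((((a0 f : ℝ) : ℂ)⁻¹ • (1 : Matrix (Fin n) (Fin n) ℂ)) *
        circMat n (fun θ => (f θ : ℂ)) *
        (((a0 f : ℝ) : ℂ)⁻¹ • (1 : Matrix (Fin n) (Fin n) ℂ))) =
        ((((a0 f : ℝ) : ℂ)⁻¹ * ((a0 f : ℝ) : ℂ)⁻¹)) • circMat n (fun θ => (f θ : ℂ)) := by
      rw [Matrix.smul_mul, Matrix.one_mul, Matrix.mul_smul, Matrix.mul_one, smul_smul]
    rw [hprod, smul_smul, smul_smul, h1', hC, smul_smul, smul_smul,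
      Finset.smul_sum, Finset.smul_sum, ← Finset.sum_sub_distrib]
    refine Finset.sum_congr rfl fun k _ => ?_
    rw [smul_smul, ← sub_smul]
    congr 1
    rw [hr_def]
    push_cast
    field_simp
  rw [hM]
  apply posdef_sum _ r hr
  intro x hx
  by_contra hall
  push_neg at hall
  apply hx
  have h0 : ((n : ℂ) • (1 : Matrix (Fin n) (Fin n) ℂ)) *ᵥ x = 0 := by
    rw [one_eq n hn, sum_mulVec']
    refine Finset.sum_eq_zero fun k _ => ?_
    rw [vecMulVec_mulVec', hall k, zero_smul]
  rw [Matrix.smul_mulVec, Matrix.one_mulVec] at h0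
  exact (smul_eq_zero.1 h0).resolve_left hnC
end
end

section
/- Let f be a real nonnegative trigonometric polynomial with f(θ₀) = 0 and f(θ) > 0 for all θ ∈ [0,2π)∖{θ₀}, and suppose the zero has order 2s, i.e., lim_{θ→θ₀} f(θ)/|θ−θ₀|^{2s} exists and is a positive finite number. Let p be a trigonometric polynomial satisfying |p(θ)|² + |p(θ+π)|² > 0 for all θ ∈ [0,2π) and limsup_{θ→θ₀} |p(θ+π)|²/f(θ) < ∞. Define f̂(θ) = (1/2)[(|p|²f)(θ/2) + (|p|²f)(θ/2 + π)] and θ̂₀ = 2θ₀ mod 2π. Then f̂(θ̂₀) = 0, f̂(θ) > 0 for all θ ∈ [0,2π)∖{θ̂₀}, and lim_{θ→θ̂₀} f̂(θ)/|θ−θ̂₀|^{2s} exists and is a positive finite number (so the zero of f̂ at θ̂₀ has the same order 2s). -/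
open Matrix Filter Set
open scoped Real Topology ComplexConjugate ComplexOrder

noncomputable section

lemma trig_continuous {z : ℕ} {g : ℝ → ℂ} (hg : IsTrigPolyDeg z g) : Continuous g := by
  obtain ⟨c, hc⟩ := hg
  rw [funext hc]
  apply continuous_finset_sum
  intro j _
  exact continuous_const.mul (Complex.continuous_exp.comp
    (continuous_const.mul Complex.continuous_ofReal))

lemma trig_periodic {z : ℕ} {g : ℝ → ℂ} (hg : IsTrigPolyDeg z g) (θ : ℝ) :
    g (θ + 2 * Real.pi) = g θ := by
  obtain ⟨c, hc⟩ := hg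
  rw [hc, hc]
  refine Finset.sum_congr rfl fun j _ => ?_
  congr 1
  rw [show (Complex.I * (j : ℂ) * ((θ + 2 * Real.pi : ℝ) : ℂ))
      = Complex.I * (j : ℂ) * (θ : ℂ) + (j : ℂ) * (2 * (Real.pi : ℂ) * Complex.I) by
    push_cast; ring]
  rw [Complex.exp_add, Complex.exp_int_mul_two_pi_mul_I, mul_one]

lemma trig_shift {z : ℕ} {g : ℝ → ℂ} (hg : IsTrigPolyDeg z g) (a : ℝ) :
    IsTrigPolyDeg z (fun θ => g (θ + a)) := by
  obtain ⟨c, hc⟩ := hg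
  refine ⟨fun j => c j * Complex.exp (Complex.I * (j : ℂ) * (a : ℂ)), fun θ => ?_⟩
  show g (θ + a) = _
  rw [hc]
  refine Finset.sum_congr rfl fun j _ => ?_
  rw [mul_assoc (c j), ← Complex.exp_add]
  congr 2
  push_cast; ring

lemma trig_analyticAt {z : ℕ} {g : ℝ → ℂ} (hg : IsTrigPolyDeg z g) (x : ℝ) :
    AnalyticAt ℝ g x := by
  obtain ⟨c, hc⟩ := hg
  rw [funext hc]
  apply Finset.analyticAt_fun_sum
  intro j _
  apply AnalyticAt.mul analyticAt_const
  have h1 : AnalyticAt ℝ (fun θ : ℝ => Complex.I * (j : ℂ) * (θ : ℂ)) x := by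
    apply AnalyticAt.mul analyticAt_const
    exact Complex.ofRealCLM.analyticAt x
  have h2 : AnalyticAt ℝ Complex.exp (Complex.I * (j : ℂ) * (x : ℂ)) :=
    analyticAt_cexp.restrictScalars
  have h3 : AnalyticAt ℝ (Complex.exp ∘ fun θ : ℝ => Complex.I * (j : ℂ) * (θ : ℂ)) x := by
    apply AnalyticAt.comp _ h1
    exact h2
  simpa [Function.comp_def] using h3

lemma trig_normSq_analyticAt {z : ℕ} {g : ℝ → ℂ} (hg : IsTrigPolyDeg z g) (x : ℝ) :
    AnalyticAt ℝ (fun θ => ‖g θ‖ ^ 2) x := by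
  have hga := trig_analyticAt hg x
  have hconj : AnalyticAt ℝ (fun θ => (starRingEnd ℂ) (g θ)) x := by
    have h1 : AnalyticAt ℝ (⇑Complex.conjCLE) (g x) :=
      (Complex.conjCLE.toContinuousLinearMap).analyticAt _
    simpa [Function.comp_def] using h1.comp hga
  have hmul : AnalyticAt ℝ (fun θ => g θ * (starRingEnd ℂ) (g θ)) x := hga.mul hconj
  have hre : AnalyticAt ℝ (fun θ => (g θ * (starRingEnd ℂ) (g θ)).re) x := by
    simpa [Function.comp_def] using (Complex.reCLM.analyticAt _).comp hmul
  apply hre.congr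
  apply Filter.Eventually.of_forall
  intro θ
  show (g θ * (starRingEnd ℂ) (g θ)).re = ‖g θ‖ ^ 2
  rw [Complex.mul_conj]
  simp [Complex.normSq_eq_norm_sq, ← Complex.ofReal_pow]

lemma key_limit (h : ℝ → ℝ) (θ₀ : ℝ) (s : ℕ)
    (hh : AnalyticAt ℝ h θ₀) (hnn : ∀ θ, 0 ≤ h θ)
    (C : ℝ) (hb : ∀ᶠ θ in 𝓝[≠] θ₀, h θ / |θ - θ₀| ^ (2 * s) ≤ C) :
    ∃ L, 0 ≤ L ∧ Filter.Tendsto (fun θ => h θ / |θ - θ₀| ^ (2 * s)) (𝓝[≠] θ₀) (𝓝 L) := by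
  have hmem : ∀ᶠ z in 𝓝[≠] θ₀, z ≠ θ₀ := by
    filter_upwards [self_mem_nhdsWithin] with z hz
    simpa using hz
  by_cases htop : analyticOrderAt h θ₀ = ⊤
  · refine ⟨0, le_refl _, ?_⟩
    have h0 : ∀ᶠ z in 𝓝 θ₀, h z = 0 := analyticOrderAt_eq_top.mp htop
    have hev : ∀ᶠ z in 𝓝[≠] θ₀, h z / |z - θ₀| ^ (2 * s) = 0 := by
      filter_upwards [h0.filter_mono nhdsWithin_le_nhds] with z hz
      rw [hz, zero_div]
    exact Filter.Tendsto.congr' (hev.mono fun z hz => hz.symm) tendsto_const_nhds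
  · obtain ⟨m, hm⟩ : ∃ m : ℕ, analyticOrderAt h θ₀ = m := by
      cases hcase : analyticOrderAt h θ₀ with
      | top => exact absurd hcase htop
      | coe m => exact ⟨m, rfl⟩
    obtain ⟨g, hga, hg0, hfg⟩ := hh.analyticOrderAt_eq_natCast.mp hm
    have hfg' : ∀ᶠ z in 𝓝[≠] θ₀, h z = (z - θ₀) ^ m * g z := by
      filter_upwards [hfg.filter_mono nhdsWithin_le_nhds] with z hz
      simpa [smul_eq_mul] using hz
    have hle : 2 * s ≤ m := by
      by_contra hlt
      push_neg at hlt
      have ht0 : Tendsto (fun z => h z / |z - θ₀| ^ m) (𝓝[≠] θ₀) (𝓝 0) := by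
        have hub : ∀ᶠ z in 𝓝[≠] θ₀, h z / |z - θ₀| ^ m ≤ C * |z - θ₀| ^ (2 * s - m) := by
          filter_upwards [hb, hmem] with z hz hzne
          have habs : (0 : ℝ) < |z - θ₀| := abs_pos.mpr (sub_ne_zero.mpr hzne)
          have he : h z / |z - θ₀| ^ m
              = (h z / |z - θ₀| ^ (2 * s)) * |z - θ₀| ^ (2 * s - m) := by
            rw [div_mul_eq_mul_div, div_eq_div_iff (by positivity) (by positivity),
              mul_assoc, ← pow_add]
            congr 2
            omega
          rw [he]
          exact mul_le_mul_of_nonneg_right hz (by positivity)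
        have hlb : ∀ᶠ z in 𝓝[≠] θ₀, 0 ≤ h z / |z - θ₀| ^ m :=
          Filter.Eventually.of_forall fun z => div_nonneg (hnn z) (by positivity)
        have hc0 : Tendsto (fun z : ℝ => C * |z - θ₀| ^ (2 * s - m)) (𝓝[≠] θ₀) (𝓝 0) := by
          have hcont : Tendsto (fun z : ℝ => C * |z - θ₀| ^ (2 * s - m)) (𝓝 θ₀)
              (𝓝 (C * |θ₀ - θ₀| ^ (2 * s - m))) :=
            (continuous_const.mul (((continuous_id.sub continuous_const).abs).pow _)).tendsto θ₀
          rw [sub_self, abs_zero, zero_pow (by omega), mul_zero] at hcont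
          exact hcont.mono_left nhdsWithin_le_nhds
        exact tendsto_of_tendsto_of_tendsto_of_le_of_le' tendsto_const_nhds hc0 hlb hub
      have hgabs : Tendsto (fun z => |g z|) (𝓝[≠] θ₀) (𝓝 |g θ₀|) :=
        (hga.continuousAt.tendsto.abs).mono_left nhdsWithin_le_nhds
      have heq : ∀ᶠ z in 𝓝[≠] θ₀, h z / |z - θ₀| ^ m = |g z| := by
        filter_upwards [hfg', hmem] with z hz hzne
        have habs : (0 : ℝ) < |z - θ₀| := abs_pos.mpr (sub_ne_zero.mpr hzne)
        rw [show h z = |h z| from (abs_of_nonneg (hnn z)).symm, hz, abs_mul, abs_pow]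
        exact mul_div_cancel_left₀ _ (pow_ne_zero m habs.ne')
      have hgabs0 : Tendsto (fun z => |g z|) (𝓝[≠] θ₀) (𝓝 0) :=
        Filter.Tendsto.congr' heq ht0
      exact hg0 (abs_eq_zero.mp (tendsto_nhds_unique hgabs hgabs0))
    -- main case : m ≥ 2s
    have hT : Tendsto (fun z => h z / |z - θ₀| ^ (2 * s)) (𝓝[≠] θ₀)
        (𝓝 ((0 : ℝ) ^ (m - 2 * s) * g θ₀)) := by
      have hTc : Tendsto (fun z : ℝ => (z - θ₀) ^ (m - 2 * s) * g z) (𝓝 θ₀)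
          (𝓝 ((θ₀ - θ₀) ^ (m - 2 * s) * g θ₀)) :=
        (((continuousAt_id.sub continuousAt_const).pow _).mul hga.continuousAt).tendsto
      rw [sub_self] at hTc
      refine Filter.Tendsto.congr' ?_ (hTc.mono_left nhdsWithin_le_nhds)
      filter_upwards [hfg', hmem] with z hz hzne
      have hne : z - θ₀ ≠ 0 := sub_ne_zero.mpr hzne
      rw [hz, show |z - θ₀| ^ (2 * s) = (z - θ₀) ^ (2 * s) by
        rw [pow_mul, sq_abs, ← pow_mul]]
      rw [eq_div_iff (pow_ne_zero _ hne), mul_right_comm, ← pow_add]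
      have hmm : m - 2 * s + 2 * s = m := by omega
      rw [hmm]
    refine ⟨(0 : ℝ) ^ (m - 2 * s) * g θ₀, ?_, hT⟩
    exact ge_of_tendsto hT (Filter.Eventually.of_forall fun z =>
      div_nonneg (hnn z) (by positivity))

/-- the coarse symbol `f̂` has a zero of the same order `2s` at `θ̂₀ = 2θ₀ mod 2π`. -/
theorem stmt6 (f : ℝ → ℝ) (p : ℝ → ℂ) (θ₀ : ℝ) (s : ℕ)
    (hf : ∃ z, IsTrigPolyDeg z (fun θ => (f θ : ℂ)))
    (hfnn : ∀ θ : ℝ, 0 ≤ f θ)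
    (hθ₀ : θ₀ ∈ Set.Ico (0 : ℝ) (2 * Real.pi))
    (hf0 : f θ₀ = 0)
    (hfpos : ∀ θ ∈ Set.Ico (0 : ℝ) (2 * Real.pi), θ ≠ θ₀ → 0 < f θ)
    (c : ℝ) (hc : 0 < c)
    (horder : Filter.Tendsto (fun θ => f θ / |θ - θ₀| ^ (2 * s)) (𝓝[≠] θ₀) (𝓝 c))
    (hp : ∃ z, IsTrigPolyDeg z p)
    (hp1 : ∀ θ ∈ Set.Ico (0 : ℝ) (2 * Real.pi), 0 < ‖p θ‖ ^ 2 + ‖p (θ + Real.pi)‖ ^ 2)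
    (hp2 : Filter.IsBoundedUnder (· ≤ ·) (𝓝[≠] θ₀) (fun θ => ‖p (θ + Real.pi)‖ ^ 2 / f θ))
    (fhat : ℝ → ℝ)
    (hfhat : ∀ θ : ℝ, fhat θ = (1 / 2) *
      (‖p (θ / 2)‖ ^ 2 * f (θ / 2) + ‖p (θ / 2 + Real.pi)‖ ^ 2 * f (θ / 2 + Real.pi)))
    (θhat : ℝ)
    (hθhat : θhat = if 2 * θ₀ < 2 * Real.pi then 2 * θ₀ else 2 * θ₀ - 2 * Real.pi) :
    fhat θhat = 0 ∧
      (∀ θ ∈ Set.Ico (0 : ℝ) (2 * Real.pi), θ ≠ θhat → 0 < fhat θ) ∧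
      ∃ c' : ℝ, 0 < c' ∧
        Filter.Tendsto (fun θ => fhat θ / |θ - θhat| ^ (2 * s)) (𝓝[≠] θhat) (𝓝 c') := by
  obtain ⟨zf, hfz⟩ := hf
  obtain ⟨zp, hpz⟩ := hp
  have hπ := Real.pi_pos
  obtain ⟨hθ00, hθ02⟩ := hθ₀
  -- continuity and periodicity
  have hfC : Continuous f := by
    have h1 : Continuous fun θ => ((f θ : ℂ)) := trig_continuous hfz
    have h2 : Continuous fun θ => ((f θ : ℂ)).re := Complex.continuous_re.comp h1
    simpa using h2
  have hpC : Continuous p := trig_continuous hpz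
  have fper : ∀ θ, f (θ + 2 * Real.pi) = f θ := by
    intro θ
    have := trig_periodic hfz θ
    exact_mod_cast this
  have pper : ∀ θ, p (θ + 2 * Real.pi) = p θ := trig_periodic hpz
  -- positivity of f away from θ₀
  have fpos' : ∀ θ, θ ≠ θ₀ → |θ - θ₀| < 2 * Real.pi → 0 < f θ := by
    intro θ hne hlt
    rw [abs_sub_lt_iff] at hlt
    obtain ⟨hl1, hl2⟩ := hlt
    rcases lt_or_ge θ 0 with h1 | h1
    · rw [← fper θ]
      refine hfpos _ ⟨by linarith, by linarith⟩ ?_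
      intro hh
      have : θ₀ - θ = 2 * Real.pi := by linarith
      linarith
    · rcases lt_or_ge θ (2 * Real.pi) with h2 | h2
      · exact hfpos θ ⟨h1, h2⟩ hne
      · rw [show θ = (θ - 2 * Real.pi) + 2 * Real.pi by ring, fper]
        refine hfpos _ ⟨by linarith, by linarith⟩ ?_
        intro hh
        have : θ - θ₀ = 2 * Real.pi := by linarith
        linarith
  have hmem : ∀ᶠ θ in 𝓝[≠] θ₀, θ ≠ θ₀ := by
    filter_upwards [self_mem_nhdsWithin] with θ hθ
    simpa using hθ
  have hevf : ∀ᶠ θ in 𝓝[≠] θ₀, 0 < f θ := by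
    have h1 : ∀ᶠ θ in 𝓝 θ₀, |θ - θ₀| < 2 * Real.pi := by
      have h2 : Tendsto (fun θ => |θ - θ₀|) (𝓝 θ₀) (𝓝 |θ₀ - θ₀|) :=
        ((continuous_id.sub continuous_const).abs).tendsto θ₀
      rw [sub_self, abs_zero] at h2
      exact h2.eventually_lt_const (by linarith)
    filter_upwards [h1.filter_mono nhdsWithin_le_nhds, hmem] with θ h1' h2'
    exact fpos' θ h2' h1'
  -- the vanishing of p at θ₀ + π
  obtain ⟨M, hM0⟩ := hp2
  have hM : ∀ᶠ θ in 𝓝[≠] θ₀, ‖p (θ + Real.pi)‖ ^ 2 / f θ ≤ M := Filter.eventually_map.mp hM0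
  have pzero : p (θ₀ + Real.pi) = 0 := by
    have h1 : Tendsto (fun θ => ‖p (θ + Real.pi)‖ ^ 2) (𝓝[≠] θ₀) (𝓝 (‖p (θ₀ + Real.pi)‖ ^ 2)) :=
      ((((hpC.comp (continuous_add_right Real.pi)).norm.pow 2)).tendsto θ₀).mono_left
        nhdsWithin_le_nhds
    have h2 : Tendsto (fun θ => M * f θ) (𝓝[≠] θ₀) (𝓝 (M * f θ₀)) :=
      ((continuous_const.mul hfC).tendsto θ₀).mono_left nhdsWithin_le_nhds
    have h3 : ∀ᶠ θ in 𝓝[≠] θ₀, ‖p (θ + Real.pi)‖ ^ 2 ≤ M * f θ := by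
      filter_upwards [hM, hevf] with θ hθ hfθ
      exact (div_le_iff₀ hfθ).mp hθ
    have h4 := le_of_tendsto_of_tendsto h1 h2 h3
    rw [hf0, mul_zero] at h4
    have h5 : ‖p (θ₀ + Real.pi)‖ = 0 := by nlinarith [norm_nonneg (p (θ₀ + Real.pi))]
    exact norm_eq_zero.mp h5
  have ppos : 0 < ‖p θ₀‖ ^ 2 := by
    have := hp1 θ₀ ⟨hθ00, hθ02⟩
    rw [pzero] at this
    simpa using this
  -- bound for the key limit
  have hbound : ∀ᶠ θ in 𝓝[≠] θ₀,
      ‖p (θ + Real.pi)‖ ^ 2 / |θ - θ₀| ^ (2 * s) ≤ (max M 0) * (c + 1) := by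
    have hfb : ∀ᶠ θ in 𝓝[≠] θ₀, f θ / |θ - θ₀| ^ (2 * s) ≤ c + 1 := by
      filter_upwards [horder.eventually_lt_const (show c < c + 1 by linarith)] with θ hθ
      exact hθ.le
    filter_upwards [hM, hfb, hevf, hmem] with θ h1 h2 h3 h4
    have hu : (0 : ℝ) < |θ - θ₀| ^ (2 * s) := pow_pos (abs_pos.mpr (sub_ne_zero.mpr h4)) _
    have he : ‖p (θ + Real.pi)‖ ^ 2 / |θ - θ₀| ^ (2 * s)
        = (‖p (θ + Real.pi)‖ ^ 2 / f θ) * (f θ / |θ - θ₀| ^ (2 * s)) := by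
      field_simp
    rw [he]
    exact mul_le_mul (h1.trans (le_max_left M 0)) h2 (div_nonneg (hfnn θ) hu.le)
      (le_max_right M 0)
  obtain ⟨L, hL0, hLt⟩ := key_limit (fun θ => ‖p (θ + Real.pi)‖ ^ 2) θ₀ s
    (trig_normSq_analyticAt (trig_shift hpz Real.pi) θ₀) (fun θ => by positivity) _ hbound
  -- Part 1
  have part1 : fhat θhat = 0 := by
    rcases lt_or_ge (2 * θ₀) (2 * Real.pi) with hcase | hcase
    · rw [if_pos hcase] at hθhat
      rw [hθhat, hfhat]
      rw [show 2 * θ₀ / 2 = θ₀ by ring, hf0, pzero]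
      simp
    · rw [if_neg (not_lt.mpr hcase)] at hθhat
      rw [hθhat, hfhat]
      rw [show (2 * θ₀ - 2 * Real.pi) / 2 = θ₀ - Real.pi by ring,
        show θ₀ - Real.pi + Real.pi = θ₀ by ring, hf0]
      have hpm : p (θ₀ - Real.pi) = 0 := by
        have h := pper (θ₀ - Real.pi)
        rw [show θ₀ - Real.pi + 2 * Real.pi = θ₀ + Real.pi by ring, pzero] at h
        exact h.symm
      rw [hpm]
      simp
  -- Part 2
  have part2 : ∀ θ ∈ Set.Ico (0 : ℝ) (2 * Real.pi), θ ≠ θhat → 0 < fhat θ := by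
    intro θ hθ hne
    obtain ⟨hθ0, hθ2⟩ := hθ
    have h2 : θ / 2 ∈ Set.Ico (0 : ℝ) (2 * Real.pi) := ⟨by linarith, by linarith⟩
    rw [hfhat]
    rcases eq_or_lt_of_le (hfnn (θ / 2)) with hf1 | hf1
    · exfalso
      have hh : θ / 2 = θ₀ := by
        by_contra hne'
        exact (hfpos _ h2 hne').ne' hf1.symm
      apply hne
      rw [hθhat, if_pos (by linarith)]
      linarith
    · rcases eq_or_lt_of_le (hfnn (θ / 2 + Real.pi)) with hf2 | hf2
      · exfalso
        have h3 : θ / 2 + Real.pi ∈ Set.Ico (0 : ℝ) (2 * Real.pi) :=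
          ⟨by linarith, by linarith⟩
        have hh : θ / 2 + Real.pi = θ₀ := by
          by_contra hne'
          exact (hfpos _ h3 hne').ne' hf2.symm
        apply hne
        rw [hθhat, if_neg (by push_neg; linarith)]
        linarith
      · have hp' := hp1 (θ / 2) h2
        have ha : (0 : ℝ) ≤ ‖p (θ / 2)‖ ^ 2 := by positivity
        have hb : (0 : ℝ) ≤ ‖p (θ / 2 + Real.pi)‖ ^ 2 := by positivity
        have hkey : 0 < ‖p (θ / 2)‖ ^ 2 * f (θ / 2)
            + ‖p (θ / 2 + Real.pi)‖ ^ 2 * f (θ / 2 + Real.pi) := by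
          rcases lt_or_eq_of_le ha with hA | hA
          · have hx := mul_pos hA hf1
            have hy := mul_nonneg hb hf2.le
            linarith
          · have hB : 0 < ‖p (θ / 2 + Real.pi)‖ ^ 2 := by
              rw [← hA] at hp'
              linarith
            have hx := mul_pos hB hf2
            have hy := mul_nonneg ha hf1.le
            linarith
        linarith
  -- Part 3
  refine ⟨part1, part2, 1 / 2 * (1 / 2 ^ (2 * s)) * (‖p θ₀‖ ^ 2 * c + L * f (θ₀ + Real.pi)),
    ?_, ?_⟩
  · have h1 : 0 < ‖p θ₀‖ ^ 2 * c := mul_pos ppos hc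
    have h2 : 0 ≤ L * f (θ₀ + Real.pi) := mul_nonneg hL0 (hfnn _)
    have h3 : (0 : ℝ) < 1 / 2 * (1 / 2 ^ (2 * s)) := by positivity
    exact mul_pos h3 (by linarith)
  · have hA : Tendsto (fun φ => ‖p φ‖ ^ 2 * (f φ / |φ - θ₀| ^ (2 * s))) (𝓝[≠] θ₀)
        (𝓝 (‖p θ₀‖ ^ 2 * c)) :=
      (((hpC.norm.pow 2).tendsto θ₀).mono_left nhdsWithin_le_nhds).mul horder
    have hB : Tendsto (fun φ => (‖p (φ + Real.pi)‖ ^ 2 / |φ - θ₀| ^ (2 * s)) * f (φ + Real.pi))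
        (𝓝[≠] θ₀) (𝓝 (L * f (θ₀ + Real.pi))) :=
      hLt.mul (((hfC.comp (continuous_add_right Real.pi)).tendsto θ₀).mono_left
        nhdsWithin_le_nhds)
    have hmain : Tendsto (fun θ => fhat θ / |θ - 2 * θ₀| ^ (2 * s)) (𝓝[≠] (2 * θ₀))
        (𝓝 (1 / 2 * (1 / 2 ^ (2 * s)) * (‖p θ₀‖ ^ 2 * c + L * f (θ₀ + Real.pi)))) := by
      have hhalf : Tendsto (fun θ : ℝ => θ / 2) (𝓝[≠] (2 * θ₀)) (𝓝[≠] θ₀) := by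
        rw [tendsto_nhdsWithin_iff]
        constructor
        · have h1 : Tendsto (fun θ : ℝ => θ / 2) (𝓝 (2 * θ₀)) (𝓝 (2 * θ₀ / 2)) :=
            (continuous_id.div_const 2).tendsto _
          rw [show 2 * θ₀ / 2 = θ₀ by ring] at h1
          exact h1.mono_left nhdsWithin_le_nhds
        · filter_upwards [self_mem_nhdsWithin] with x hx
          simp only [Set.mem_compl_iff, Set.mem_singleton_iff] at hx ⊢
          intro hxx
          exact hx (by linarith)
      have hcomp := ((hA.add hB).const_mul (1 / 2 * (1 / 2 ^ (2 * s)))).comp hhalf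
      apply hcomp.congr'
      filter_upwards [self_mem_nhdsWithin] with θ hθ
      simp only [Set.mem_compl_iff, Set.mem_singleton_iff] at hθ
      have hne2 : θ / 2 - θ₀ ≠ 0 := fun hh => hθ (by linarith)
      have hu : (0 : ℝ) < |θ / 2 - θ₀| ^ (2 * s) := pow_pos (abs_pos.mpr hne2) _
      simp only [Function.comp]
      rw [hfhat θ, show θ - 2 * θ₀ = 2 * (θ / 2 - θ₀) by ring, abs_mul, mul_pow, abs_two]
      have h2s : (0 : ℝ) < (2 : ℝ) ^ (2 * s) := by positivity
      have halg : ∀ a b f1 f2 u v : ℝ, u ≠ 0 → v ≠ 0 →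
          1 / 2 * (1 / v) * (a * (f1 / u) + b / u * f2) = 1 / 2 * (a * f1 + b * f2) / (v * u) := by
        intro a b f1 f2 u v hu hv
        field_simp
      exact halg _ _ _ _ _ _ hu.ne' h2s.ne'
    rcases lt_or_ge (2 * θ₀) (2 * Real.pi) with hcase | hcase
    · rw [hθhat, if_pos hcase]
      exact hmain
    · rw [hθhat, if_neg (not_lt.mpr hcase)]
      have fhatper : ∀ θ, fhat (θ + 2 * Real.pi) = fhat θ := by
        intro θ
        rw [hfhat, hfhat]
        rw [show (θ + 2 * Real.pi) / 2 = θ / 2 + Real.pi by ring,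
          show θ / 2 + Real.pi + Real.pi = θ / 2 + 2 * Real.pi by ring,
          fper (θ / 2), pper (θ / 2)]
        ring
      have hshift : Tendsto (fun θ : ℝ => θ + 2 * Real.pi)
          (𝓝[≠] (2 * θ₀ - 2 * Real.pi)) (𝓝[≠] (2 * θ₀)) := by
        rw [tendsto_nhdsWithin_iff]
        constructor
        · have h1 : Tendsto (fun θ : ℝ => θ + 2 * Real.pi) (𝓝 (2 * θ₀ - 2 * Real.pi))
              (𝓝 (2 * θ₀ - 2 * Real.pi + 2 * Real.pi)) :=
            (continuous_id.add continuous_const).tendsto _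
          rw [show 2 * θ₀ - 2 * Real.pi + 2 * Real.pi = 2 * θ₀ by ring] at h1
          exact h1.mono_left nhdsWithin_le_nhds
        · filter_upwards [self_mem_nhdsWithin] with x hx
          simp only [Set.mem_compl_iff, Set.mem_singleton_iff] at hx ⊢
          intro hxx
          exact hx (by linarith)
      have hcomp := hmain.comp hshift
      apply hcomp.congr
      intro θ
      simp only [Function.comp]
      rw [fhatper θ, show θ + 2 * Real.pi - 2 * θ₀ = θ - (2 * θ₀ - 2 * Real.pi) by ring]
end
end

section
/- Let p_A be a trigonometric polynomial of degree q_A and f_{A,0} a trigonometric polynomial of degree z₀. Define recursively f_{A,ℓ+1} = ψ(|p_A|²·f_{A,ℓ}) for ℓ ≥ 0, where ψ(g)(θ) = (1/2)[g(θ/2) + g(θ/2+π)]. Then (1) the degree of f_{A,ℓ} is at most max(z₀, 2q_A) for every ℓ ≥ 0, and (2) there exists L such that for all ℓ ≥ L the degree of f_{A,ℓ} is at most 2q_A. -/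
open Matrix Filter Set
open scoped Real Topology ComplexConjugate ComplexOrder

noncomputable section

lemma trig_mono {z z' : ℕ} (h : z ≤ z') {f : ℝ → ℂ} (hf : IsTrigPolyDeg z f) :
    IsTrigPolyDeg z' f := by
  obtain ⟨c, hc⟩ := hf
  refine ⟨fun j => if j ∈ Finset.Icc (-(z : ℤ)) (z : ℤ) then c j else 0, fun θ => ?_⟩
  rw [hc θ]
  have hsub : Finset.Icc (-(z : ℤ)) (z : ℤ) ⊆ Finset.Icc (-(z' : ℤ)) (z' : ℤ) := by
    intro j hj
    simp only [Finset.mem_Icc] at *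
    omega
  rw [← Finset.sum_subset hsub (fun j _ hj => by simp only [if_neg hj, zero_mul])]
  exact Finset.sum_congr rfl fun j hj => by simp only [if_pos hj]

lemma trig_mul {a b : ℕ} {f g : ℝ → ℂ} (hf : IsTrigPolyDeg a f) (hg : IsTrigPolyDeg b g) :
    IsTrigPolyDeg (a + b) (fun θ => f θ * g θ) := by
  obtain ⟨c, hc⟩ := hf
  obtain ⟨d, hd⟩ := hg
  refine ⟨fun m => ∑ j ∈ Finset.Icc (-(a : ℤ)) (a : ℤ),
      c j * (if m - j ∈ Finset.Icc (-(b : ℤ)) (b : ℤ) then d (m - j) else 0), fun θ => ?_⟩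
  simp only [hc θ, hd θ, Finset.sum_mul_sum]
  symm
  push_cast
  simp only [Finset.sum_mul]
  rw [Finset.sum_comm]
  refine Finset.sum_congr rfl fun j hj => ?_
  have hsub : (Finset.Icc (-(b : ℤ)) (b : ℤ)).map
      ⟨fun k => j + k, add_right_injective j⟩ ⊆
      Finset.Icc (-((a : ℤ) + b)) ((a : ℤ) + b) := by
    intro m hm
    simp only [Finset.mem_map, Finset.mem_Icc, Function.Embedding.coeFn_mk] at hm ⊢
    obtain ⟨k, hk, rfl⟩ := hm
    simp only [Finset.mem_Icc] at hj
    omega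
  rw [← Finset.sum_subset hsub (f := fun m =>
      c j * (if m - j ∈ Finset.Icc (-(b : ℤ)) (b : ℤ) then d (m - j) else 0) *
        Complex.exp (Complex.I * m * θ)) ?_]
  · rw [Finset.sum_map]
    refine Finset.sum_congr rfl fun k hk => ?_
    simp only [Function.Embedding.coeFn_mk, add_sub_cancel_left, if_pos hk]
    rw [mul_mul_mul_comm, ← Complex.exp_add]
    congr 2
    push_cast
    ring
  · intro m hm hm'
    have hnot : m - j ∉ Finset.Icc (-(b : ℤ)) (b : ℤ) := by
      intro hmem
      exact hm' (Finset.mem_map.mpr ⟨m - j, hmem, by simp⟩)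
    simp only [if_neg hnot, mul_zero, zero_mul]

lemma trig_conj {q : ℕ} {p : ℝ → ℂ} (hp : IsTrigPolyDeg q p) :
    IsTrigPolyDeg q (fun θ => (starRingEnd ℂ) (p θ)) := by
  obtain ⟨c, hc⟩ := hp
  refine ⟨fun j => (starRingEnd ℂ) (c (-j)), fun θ => ?_⟩
  simp only [hc θ, map_sum, _root_.map_mul, ← Complex.exp_conj]
  refine Finset.sum_equiv (Equiv.neg ℤ)
    (fun i => by simp only [Finset.mem_Icc, Equiv.neg_apply]; omega)
    (fun j hj => ?_)
  simp only [Equiv.neg_apply, neg_neg, _root_.map_mul, Complex.conj_I, Complex.conj_ofReal,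
    map_intCast]
  congr 1
  congr 1
  push_cast
  ring

lemma trig_normsq {q : ℕ} {p : ℝ → ℂ} (hp : IsTrigPolyDeg q p) :
    IsTrigPolyDeg (2 * q) (fun θ => ((‖p θ‖ ^ 2 : ℝ) : ℂ)) := by
  have h := trig_mul hp (trig_conj hp)
  have he : (fun θ => ((‖p θ‖ ^ 2 : ℝ) : ℂ)) = fun θ => p θ * (starRingEnd ℂ) (p θ) := by
    funext θ
    rw [Complex.mul_conj]
    norm_cast
    simp [Complex.normSq_eq_norm_sq]
  rw [he, two_mul]
  exact h

lemma trig_psi {d : ℕ} {f : ℝ → ℂ} (hf : IsTrigPolyDeg d f) :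
    IsTrigPolyDeg (d / 2) (psiC f) := by
  obtain ⟨c, hc⟩ := hf
  refine ⟨fun m => c (2 * m), fun θ => ?_⟩
  unfold psiC
  rw [hc, hc, ← Finset.sum_add_distrib, Finset.mul_sum]
  have hsub : (Finset.Icc (-((d / 2 : ℕ) : ℤ)) ((d / 2 : ℕ) : ℤ)).map
      ⟨fun m => 2 * m, mul_right_injective₀ (two_ne_zero' ℤ)⟩ ⊆
      Finset.Icc (-(d : ℤ)) (d : ℤ) := by
    intro m hm
    simp only [Finset.mem_map, Finset.mem_Icc, Function.Embedding.coeFn_mk] at hm ⊢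
    obtain ⟨k, hk, rfl⟩ := hm
    omega
  rw [← Finset.sum_subset hsub (f := fun j =>
      (1 / 2 : ℂ) * (c j * Complex.exp (Complex.I * j * ((θ / 2 : ℝ) : ℂ)) +
        c j * Complex.exp (Complex.I * j * ((θ / 2 + Real.pi : ℝ) : ℂ)))) ?_]
  · rw [Finset.sum_map]
    refine Finset.sum_congr rfl fun m hm => ?_
    simp only [Function.Embedding.coeFn_mk]
    have h1 : Complex.exp (Complex.I * ((2 * m : ℤ) : ℂ) * ((θ / 2 : ℝ) : ℂ)) =
        Complex.exp (Complex.I * (m : ℂ) * (θ : ℂ)) := by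
      congr 1
      push_cast
      ring
    have h2 : Complex.exp (Complex.I * ((2 * m : ℤ) : ℂ) * ((θ / 2 + Real.pi : ℝ) : ℂ)) =
        Complex.exp (Complex.I * (m : ℂ) * (θ : ℂ)) := by
      rw [show Complex.I * ((2 * m : ℤ) : ℂ) * ((θ / 2 + Real.pi : ℝ) : ℂ) =
          Complex.I * (m : ℂ) * (θ : ℂ) + (m : ℤ) * (2 * (Real.pi : ℂ) * Complex.I) by
        push_cast; ring]
      rw [Complex.exp_add, Complex.exp_int_mul_two_pi_mul_I, mul_one]
    rw [h1, h2]
    ring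
  · intro j hjmem hj
    simp only [Finset.mem_Icc] at hjmem
    rcases Int.even_or_odd j with ⟨k, hk⟩ | ⟨k, hk⟩
    · exfalso
      apply hj
      simp only [Finset.mem_map, Finset.mem_Icc, Function.Embedding.coeFn_mk]
      exact ⟨k, ⟨by omega, by omega⟩, by omega⟩
    · subst hk
      have h3 : Complex.exp (Complex.I * ((2 * k + 1 : ℤ) : ℂ) * ((θ / 2 + Real.pi : ℝ) : ℂ)) =
          - Complex.exp (Complex.I * ((2 * k + 1 : ℤ) : ℂ) * ((θ / 2 : ℝ) : ℂ)) := by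
        rw [show Complex.I * ((2 * k + 1 : ℤ) : ℂ) * ((θ / 2 + Real.pi : ℝ) : ℂ) =
            Complex.I * ((2 * k + 1 : ℤ) : ℂ) * ((θ / 2 : ℝ) : ℂ) +
              ((k : ℤ) : ℂ) * (2 * (Real.pi : ℂ) * Complex.I) + (Real.pi : ℂ) * Complex.I by
          push_cast; ring]
        rw [Complex.exp_add, Complex.exp_add, Complex.exp_int_mul_two_pi_mul_I,
          Complex.exp_pi_mul_I]
        ring
      simp only [h3]
      ring

/-- bounds on the degrees of the coarse symbols `f_{A,ℓ}`. -/
theorem stmt8 (qA z₀ : ℕ) (pA : ℝ → ℂ) (hpA : IsTrigPolyDeg qA pA)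
    (fA : ℕ → ℝ → ℂ) (h0 : IsTrigPolyDeg z₀ (fA 0))
    (hrec : ∀ ℓ : ℕ, fA (ℓ + 1) = psiC (fun θ => ((‖pA θ‖ ^ 2 : ℝ) : ℂ) * fA ℓ θ)) :
    (∀ ℓ : ℕ, IsTrigPolyDeg (max z₀ (2 * qA)) (fA ℓ)) ∧
      ∃ L : ℕ, ∀ ℓ ≥ L, IsTrigPolyDeg (2 * qA) (fA ℓ) := by
  set b : ℕ → ℕ := fun ℓ => Nat.rec z₀ (fun _ x => (2 * qA + x) / 2) ℓ with hb
  have hstep : ∀ n, b (n + 1) = (2 * qA + b n) / 2 := fun n => rfl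
  have hdeg : ∀ ℓ, IsTrigPolyDeg (b ℓ) (fA ℓ) := by
    intro ℓ
    induction ℓ with
    | zero => exact h0
    | succ n ih =>
      rw [hrec n, hstep n]
      exact trig_psi (trig_mul (trig_normsq hpA) ih)
  have hbnd : ∀ ℓ, b ℓ ≤ 2 * qA + z₀ / 2 ^ ℓ := by
    intro ℓ
    induction ℓ with
    | zero => show z₀ ≤ 2 * qA + z₀ / 2 ^ 0; simp
    | succ n ih =>
      have h2 : z₀ / 2 ^ (n + 1) = z₀ / 2 ^ n / 2 := by
        rw [pow_succ, Nat.div_div_eq_div_mul]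
      rw [hstep n]
      omega
  constructor
  · intro ℓ
    have hm : ∀ ℓ, b ℓ ≤ max z₀ (2 * qA) := by
      intro ℓ
      induction ℓ with
      | zero => exact le_max_left _ _
      | succ n ih => rw [hstep n]; omega
    exact trig_mono (hm ℓ) (hdeg ℓ)
  · refine ⟨z₀, fun ℓ hℓ => ?_⟩
    have hz : z₀ / 2 ^ ℓ = 0 :=
      Nat.div_eq_of_lt (lt_of_lt_of_le (Nat.lt_two_pow_self (n := z₀))
        (Nat.pow_le_pow_right (by norm_num) hℓ))
    have := hbnd ℓ
    exact trig_mono (by omega) (hdeg ℓ)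
end
end

section
/- Let p_A and p_Ĉ be trigonometric polynomials of degrees q_A and q_Ĉ, and set q = max(q_A, q_Ĉ). Let f_{A,0}, f_{B,0}, f_{C,0} be trigonometric polynomials with â₀(f_{A,ℓ}) ≠ 0 at every level, let (α_ℓ) be real numbers, and define recursively, with ψ(g)(θ) = (1/2)[g(θ/2) + g(θ/2+π)]: f_{A,ℓ+1} = ψ(|p_A|²·f_{A,ℓ}); f_{B,ℓ+1} = ψ( p̄_Ĉ · f_{B,ℓ} · (1 − (α_ℓ/â₀(f_{A,ℓ}))f_{A,ℓ}) · p_A ); f_{Ĉ,ℓ} = f_{C,ℓ} + (α_ℓ|f_{B,ℓ}|²/â₀(f_{A,ℓ}))·(2 − (α_ℓ/â₀(f_{A,ℓ}))f_{A,ℓ}); f_{C,ℓ+1} = ψ(|p_Ĉ|²·f_{Ĉ,ℓ}). Then for all sufficiently large ℓ: (1) deg f_{B,ℓ} ≤ max(2·deg f_{B,0}, 4q), and (2) deg f_{C,ℓ} ≤ max(4·deg f_{B,0}, 6q, 2·deg f_{C,0}). -/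
open Matrix Filter Set
open scoped Real Topology ComplexConjugate ComplexOrder

noncomputable section

/- ### Auxiliary machinery -/

noncomputable abbrev trigE (j : ℤ) (θ : ℝ) : ℂ := Complex.exp (Complex.I * (j : ℂ) * (θ : ℝ))

lemma trigE_mul (j k : ℤ) (θ : ℝ) : trigE j θ * trigE k θ = trigE (j + k) θ := by
  rw [trigE, trigE, trigE, ← Complex.exp_add]; push_cast; ring_nf

lemma trigE_conj (j : ℤ) (θ : ℝ) : conj (trigE j θ) = trigE (-j) θ := by
  rw [trigE, ← Complex.exp_conj]; congr 1
  simp [_root_.map_mul, Complex.conj_I, Complex.conj_ofReal]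

lemma trigE_zero (θ : ℝ) : trigE 0 θ = 1 := by simp [trigE]

lemma trigE_half (m : ℤ) (θ : ℝ) : trigE (2*m) (θ/2) = trigE m θ := by
  rw [trigE, trigE]; congr 1; push_cast; ring

lemma trigE_pi (j : ℤ) (θ : ℝ) : trigE j (θ + Real.pi) = trigE j θ * (-1)^j := by
  rw [trigE, trigE]
  push_cast [mul_add]
  rw [Complex.exp_add]
  congr 1
  rw [show Complex.I * (j:ℂ) * (Real.pi:ℂ) = (j:ℤ) * ((Real.pi:ℂ) * Complex.I) by push_cast; ring,
    Complex.exp_int_mul, Complex.exp_pi_mul_I]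

lemma tp_mono {z w : ℕ} {f : ℝ → ℂ} (h : IsTrigPolyDeg z f) (hzw : z ≤ w) :
    IsTrigPolyDeg w f := by
  obtain ⟨c, hc⟩ := h
  refine ⟨fun j => if j ∈ Finset.Icc (-(z:ℤ)) z then c j else 0, fun θ => ?_⟩
  rw [hc]
  calc ∑ j ∈ Finset.Icc (-(z:ℤ)) z, c j * trigE j θ
      = ∑ j ∈ Finset.Icc (-(z:ℤ)) z, (if j ∈ Finset.Icc (-(z:ℤ)) z then c j else 0) * trigE j θ :=
        Finset.sum_congr rfl fun j hj => by rw [if_pos hj]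
    _ = ∑ j ∈ Finset.Icc (-(w:ℤ)) w, (if j ∈ Finset.Icc (-(z:ℤ)) z then c j else 0) * trigE j θ :=
        Finset.sum_subset (Finset.Icc_subset_Icc (by omega) (by omega))
          (fun x _ hx => by rw [if_neg hx, zero_mul])

lemma tp_congr {z : ℕ} {f g : ℝ → ℂ} (h : IsTrigPolyDeg z f) (hfg : ∀ θ, f θ = g θ) :
    IsTrigPolyDeg z g := by
  obtain ⟨c, hc⟩ := h
  exact ⟨c, fun θ => by rw [← hfg θ, hc]⟩

lemma tp_add {z : ℕ} {f g : ℝ → ℂ} (hf : IsTrigPolyDeg z f) (hg : IsTrigPolyDeg z g) :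
    IsTrigPolyDeg z (fun θ => f θ + g θ) := by
  obtain ⟨c, hc⟩ := hf; obtain ⟨d, hd⟩ := hg
  refine ⟨c + d, fun θ => ?_⟩
  simp only [hc, hd, ← Finset.sum_add_distrib, Pi.add_apply]
  exact Finset.sum_congr rfl fun j _ => by ring

lemma tp_const (z : ℕ) (k : ℂ) : IsTrigPolyDeg z (fun _ => k) := by
  refine ⟨fun j => if j = 0 then k else 0, fun θ => ?_⟩
  rw [Finset.sum_congr rfl (g := fun j => if j = 0 then k * trigE j θ else 0)
    (fun j _ => by by_cases h : j = 0 <;> simp [h, trigE_zero])]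
  rw [Finset.sum_ite_eq' (Finset.Icc (-(z:ℤ)) z) 0 (fun j => k * trigE j θ)]
  simp [trigE_zero]

lemma tp_neg {z : ℕ} {f : ℝ → ℂ} (hf : IsTrigPolyDeg z f) :
    IsTrigPolyDeg z (fun θ => -(f θ)) := by
  obtain ⟨c, hc⟩ := hf
  refine ⟨fun j => -(c j), fun θ => ?_⟩
  simp only [hc, ← Finset.sum_neg_distrib]
  exact Finset.sum_congr rfl fun j _ => by ring

lemma tp_sub {z : ℕ} {f g : ℝ → ℂ} (hf : IsTrigPolyDeg z f) (hg : IsTrigPolyDeg z g) :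
    IsTrigPolyDeg z (fun θ => f θ - g θ) :=
  tp_congr (tp_add hf (tp_neg hg)) (fun θ => by ring)

lemma tp_mul {z w : ℕ} {f g : ℝ → ℂ} (hf : IsTrigPolyDeg z f) (hg : IsTrigPolyDeg w g) :
    IsTrigPolyDeg (z + w) (fun θ => f θ * g θ) := by
  obtain ⟨c, hc⟩ := hf; obtain ⟨d, hd⟩ := hg
  classical
  refine ⟨fun m => ∑ p ∈ (Finset.Icc (-(z:ℤ)) z ×ˢ Finset.Icc (-(w:ℤ)) w).filter
      (fun p => p.1 + p.2 = m), c p.1 * d p.2, fun θ => ?_⟩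
  beta_reduce
  rw [hc, hd, Finset.sum_mul_sum, ← Finset.sum_product']
  rw [← Finset.sum_fiberwise_of_maps_to (t := Finset.Icc (-((z+w : ℕ):ℤ)) ((z+w : ℕ):ℤ))
    (g := fun p : ℤ × ℤ => p.1 + p.2)
    (fun p hp => by
      simp only [Finset.mem_product, Finset.mem_Icc] at hp
      simp only [Finset.mem_Icc]; push_cast; omega)
    (fun p => c p.1 * trigE p.1 θ * (d p.2 * trigE p.2 θ))]
  refine Finset.sum_congr rfl fun m _ => ?_
  rw [Finset.sum_mul]
  refine Finset.sum_congr rfl fun p hp => ?_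
  simp only [Finset.mem_filter] at hp
  rw [mul_mul_mul_comm, trigE_mul, hp.2]

lemma tp_conj {z : ℕ} {f : ℝ → ℂ} (hf : IsTrigPolyDeg z f) :
    IsTrigPolyDeg z (fun θ => conj (f θ)) := by
  obtain ⟨c, hc⟩ := hf
  refine ⟨fun j => conj (c (-j)), fun θ => ?_⟩
  beta_reduce
  rw [hc, map_sum]
  refine Finset.sum_nbij' (i := fun j => -j) (j := fun j => -j) ?_ ?_ ?_ ?_ ?_
  · intro a ha; simp only [Finset.mem_Icc] at *; omega
  · intro a ha; simp only [Finset.mem_Icc] at *; omega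
  · intro a _; ring
  · intro a _; ring
  · intro a _
    rw [_root_.map_mul, trigE_conj, neg_neg, trigE]

lemma tp_normSq {z : ℕ} {f : ℝ → ℂ} (hf : IsTrigPolyDeg z f) :
    IsTrigPolyDeg (z + z) (fun θ => ((‖f θ‖ ^ 2 : ℝ) : ℂ)) :=
  tp_congr (tp_mul hf (tp_conj hf)) (fun θ => by
    rw [Complex.mul_conj, Complex.sq_norm])

lemma tp_psiC {z : ℕ} {f : ℝ → ℂ} (hf : IsTrigPolyDeg z f) :
    IsTrigPolyDeg (z / 2) (psiC f) := by
  classical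
  obtain ⟨c, hc⟩ := hf
  refine ⟨fun m => c (2 * m), fun θ => ?_⟩
  have key : psiC f θ = ∑ j ∈ Finset.Icc (-(z:ℤ)) z, c j * ((1 + (-1)^j)/2) * trigE j (θ/2) := by
    show (1/2 : ℂ) * (f (θ/2) + f (θ/2 + Real.pi)) = _
    rw [hc, hc]
    simp only [trigE_pi]
    rw [← Finset.sum_add_distrib, Finset.mul_sum]
    refine Finset.sum_congr rfl fun j _ => ?_
    ring
  rw [key]
  have hz : ∀ j ∈ Finset.Icc (-(z:ℤ)) z, ¬ Even j → c j * ((1 + (-1)^j)/2) * trigE j (θ/2) = 0 := by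
    intro j _ hj
    rw [(Int.not_even_iff_odd.mp hj).neg_one_zpow]
    norm_num
  rw [← Finset.sum_filter_of_ne (p := fun j => Even j) (fun x hx h => by
      by_contra hEv; exact h (hz x hx hEv))]
  have himg : (Finset.Icc (-(z:ℤ)) z).filter (fun j => Even j)
      = (Finset.Icc (-((z/2 : ℕ):ℤ)) ((z/2 : ℕ):ℤ)).image (fun m => 2 * m) := by
    ext j
    simp only [Finset.mem_filter, Finset.mem_Icc, Finset.mem_image, Int.even_iff]
    constructor
    · rintro ⟨⟨h1, h2⟩, h3⟩
      exact ⟨j / 2, by omega, by omega⟩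
    · rintro ⟨m, ⟨h1, h2⟩, rfl⟩
      omega
  rw [himg, Finset.sum_image (fun a _ b _ h => by omega)]
  refine Finset.sum_congr rfl fun m hm => ?_
  rw [trigE_half]
  rw [(even_two_mul m).neg_one_zpow]
  norm_num

/-- Degree-bound recursions. -/
def degA (qA z0 : ℕ) : ℕ → ℕ
  | 0 => z0
  | n+1 => (qA + qA + degA qA z0 n) / 2

def degB (qA qC zA0 zB0 : ℕ) : ℕ → ℕ
  | 0 => zB0
  | n+1 => (qC + degB qA qC zA0 zB0 n + degA qA zA0 n + qA) / 2

def degC (qA qC zA0 zB0 zC0 : ℕ) : ℕ → ℕ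
  | 0 => zC0
  | n+1 => (qC + qC + max (degC qA qC zA0 zB0 zC0 n)
      (degB qA qC zA0 zB0 n + degB qA qC zA0 zB0 n + degA qA zA0 n)) / 2

lemma ev_le (u : ℕ → ℕ) (K M : ℕ) (hKM : 2*K ≤ M)
    (h : ∀ n, u (n+1) ≤ max (u n / 2 + K) M) :
    ∀ n, u n ≤ max M (u 0 / 2^n + 2*K) := by
  intro n
  induction n with
  | zero => simpa using by omega
  | succ n ih =>
    have h2 : u 0 / 2^(n+1) = u 0 / 2^n / 2 := by
      rw [Nat.div_div_eq_div_mul, pow_succ]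
    have h3 := h n
    omega

lemma ev_le' (u : ℕ → ℕ) (K M : ℕ) (hKM : 2*K ≤ M)
    (h : ∀ n, u (n+1) ≤ max (u n / 2 + K) M) :
    ∀ n ≥ u 0, u n ≤ M := by
  intro n hn
  have h1 := ev_le u K M hKM h n
  have h2 : u 0 / 2^n = 0 := by
    apply Nat.div_eq_of_lt
    calc u 0 < 2 ^ (u 0) := Nat.lt_two_pow_self
    _ ≤ 2 ^ n := Nat.pow_le_pow_right (by norm_num) hn
  omega

lemma ev_le'' (u : ℕ → ℕ) (K M L0 : ℕ) (hKM : 2*K ≤ M)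
    (h : ∀ n ≥ L0, u (n+1) ≤ max (u n / 2 + K) M) :
    ∃ L, ∀ n ≥ L, u n ≤ M := by
  have hv : ∀ n, u (n + L0 + 1) ≤ max (u (n + L0) / 2 + K) M := fun n => h (n + L0) (by omega)
  have hmain := ev_le' (fun n => u (n + L0)) K M hKM (fun n => by
    have := hv n
    have e : n + L0 + 1 = n + 1 + L0 := by omega
    rw [e] at this
    exact this)
  beta_reduce at hmain
  refine ⟨L0 + u (0 + L0), fun m hm => ?_⟩
  have h2 := hmain (m - L0) (by omega)
  rw [show m - L0 + L0 = m by omega] at h2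
  exact h2

/-- eventual bounds on the degrees of the coarse symbols `f_{B,ℓ}`, `f_{C,ℓ}`. -/
theorem stmt9 (qA qC zA0 zB0 zC0 : ℕ) (pA pC : ℝ → ℂ)
    (hpA : IsTrigPolyDeg qA pA) (hpC : IsTrigPolyDeg qC pC)
    (fA fB fC : ℕ → ℝ → ℂ) (α : ℕ → ℝ)
    (hA0 : IsTrigPolyDeg zA0 (fA 0))
    (hB0 : IsTrigPolyDeg zB0 (fB 0))
    (hC0 : IsTrigPolyDeg zC0 (fC 0))
    (ha0 : ∀ ℓ : ℕ, fcoeff (fA ℓ) 0 ≠ 0)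
    (hArec : ∀ ℓ : ℕ, fA (ℓ + 1) = psiC (fun θ => ((‖pA θ‖ ^ 2 : ℝ) : ℂ) * fA ℓ θ))
    (hBrec : ∀ ℓ : ℕ, fB (ℓ + 1) = psiC (fun θ =>
      (starRingEnd ℂ) (pC θ) * fB ℓ θ *
        (1 - ((α ℓ : ℝ) : ℂ) / fcoeff (fA ℓ) 0 * fA ℓ θ) * pA θ))
    (hCrec : ∀ ℓ : ℕ, fC (ℓ + 1) = psiC (fun θ => ((‖pC θ‖ ^ 2 : ℝ) : ℂ) *
      (fC ℓ θ + ((α ℓ : ℝ) : ℂ) * ((‖fB ℓ θ‖ ^ 2 : ℝ) : ℂ) / fcoeff (fA ℓ) 0 *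
        (2 - ((α ℓ : ℝ) : ℂ) / fcoeff (fA ℓ) 0 * fA ℓ θ)))) :
    ∃ L : ℕ, ∀ ℓ ≥ L,
      IsTrigPolyDeg (max (2 * zB0) (4 * max qA qC)) (fB ℓ) ∧
      IsTrigPolyDeg (max (max (4 * zB0) (6 * max qA qC)) (2 * zC0)) (fC ℓ) := by
  have key : ∀ ℓ, IsTrigPolyDeg (degA qA zA0 ℓ) (fA ℓ) ∧
      IsTrigPolyDeg (degB qA qC zA0 zB0 ℓ) (fB ℓ) ∧
      IsTrigPolyDeg (degC qA qC zA0 zB0 zC0 ℓ) (fC ℓ) := by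
    intro ℓ
    induction ℓ with
    | zero => exact ⟨hA0, hB0, hC0⟩
    | succ n ih =>
      obtain ⟨ha, hb, hc⟩ := ih
      refine ⟨?_, ?_, ?_⟩
      · rw [hArec n]
        simp only [degA]
        exact tp_psiC (tp_mul (tp_normSq hpA) ha)
      · rw [hBrec n]
        simp only [degB]
        refine tp_psiC ?_
        have hk : IsTrigPolyDeg (qC + degB qA qC zA0 zB0 n + degA qA zA0 n + qA)
            (fun θ => conj (pC θ) * fB n θ *
              ((fun _ => (1:ℂ)) θ - (fun θ => (((α n : ℝ) : ℂ) / fcoeff (fA n) 0) * fA n θ) θ) *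
              pA θ) :=
          tp_mul (tp_mul (tp_mul (tp_conj hpC) hb)
            (tp_sub (tp_const (degA qA zA0 n) 1)
              (tp_mono (tp_mul (tp_const 0 (((α n : ℝ) : ℂ) / fcoeff (fA n) 0)) ha)
                (by omega)))) hpA
        exact tp_congr hk (fun θ => by ring)
      · rw [hCrec n]
        simp only [degC]
        refine tp_psiC ?_
        have g2 : IsTrigPolyDeg (degA qA zA0 n)
            (fun θ => (fun _ => (2:ℂ)) θ -
              (fun θ => (((α n : ℝ) : ℂ) / fcoeff (fA n) 0) * fA n θ) θ) :=
          tp_sub (tp_const (degA qA zA0 n) 2)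
            (tp_mono (tp_mul (tp_const 0 (((α n : ℝ) : ℂ) / fcoeff (fA n) 0)) ha) (by omega))
        have g12 : IsTrigPolyDeg (0 + (degB qA qC zA0 zB0 n + degB qA qC zA0 zB0 n) + 0 +
            degA qA zA0 n)
            (fun θ => (((α n : ℝ) : ℂ) * ((‖fB n θ‖ ^ 2 : ℝ) : ℂ) * (fcoeff (fA n) 0)⁻¹) *
              ((fun _ => (2:ℂ)) θ -
                (fun θ => (((α n : ℝ) : ℂ) / fcoeff (fA n) 0) * fA n θ) θ)) :=
          tp_mul (tp_mul (tp_mul (tp_const 0 ((α n : ℝ) : ℂ)) (tp_normSq hb))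
            (tp_const 0 (fcoeff (fA n) 0)⁻¹)) g2
        have hM : IsTrigPolyDeg (max (degC qA qC zA0 zB0 zC0 n)
              (degB qA qC zA0 zB0 n + degB qA qC zA0 zB0 n + degA qA zA0 n))
            (fun θ => fC n θ +
              ((((α n : ℝ) : ℂ) * ((‖fB n θ‖ ^ 2 : ℝ) : ℂ) * (fcoeff (fA n) 0)⁻¹) *
                ((fun _ => (2:ℂ)) θ -
                  (fun θ => (((α n : ℝ) : ℂ) / fcoeff (fA n) 0) * fA n θ) θ))) :=
          tp_add (tp_mono hc (by omega)) (tp_mono g12 (by omega))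
        have hk := tp_mul (tp_normSq hpC) hM
        exact tp_congr hk (fun θ => by ring)
  obtain ⟨LA, hLA⟩ := ev_le'' (degA qA zA0) (max qA qC) (2 * max qA qC) 0 (by omega)
    (fun n _ => by simp only [degA]; omega)
  obtain ⟨LB, hLB⟩ := ev_le'' (degB qA qC zA0 zB0) (2 * max qA qC) (4 * max qA qC) LA (by omega)
    (fun n hn => by have h1 := hLA n hn; simp only [degB]; omega)
  obtain ⟨LC, hLC⟩ := ev_le'' (degC qA qC zA0 zB0 zC0) (max qA qC) (6 * max qA qC) (max LA LB)
    (by omega)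
    (fun n hn => by
      have h1 := hLA n (by omega)
      have h2 := hLB n (by omega)
      simp only [degC]
      omega)
  refine ⟨max (max LA LB) LC, fun ℓ hℓ => ?_⟩
  constructor
  · exact tp_mono (key ℓ).2.1 (by have := hLB ℓ (by omega); omega)
  · exact tp_mono (key ℓ).2.2 (by have := hLC ℓ (by omega); omega)
end
end

section
/- Let f_A be a real nonnegative trigonometric polynomial with f_A(0) = 0 and f_A(θ) > 0 for θ ∈ (0,2π); let f_C be a real nonnegative trigonometric polynomial; let f_B be a trigonometric polynomial with f_B(0) = 0, f_B(θ) ≠ 0 for θ ∈ (0,2π), and limsup_{θ→0} |f_B(θ)|²/f_A(θ) < ∞; let 0 < α < 2â₀(f_A)/‖f_A‖_∞. Let p_A and p_Ĉ be trigonometric polynomials with |p_A(θ)|²+|p_A(θ+π)|² > 0 and |p_Ĉ(θ)|²+|p_Ĉ(θ+π)|² > 0 for all θ, and limsup_{θ→0} |p_A(θ+π)|²/f_A(θ) < ∞. With ψ(g)(θ) = (1/2)[g(θ/2) + g(θ/2+π)], define f_A' = ψ(|p_A|²f_A), f_Ĉ = f_C + (α|f_B|²/â₀(f_A))(2 − (α/â₀(f_A))f_A),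 f_C' = ψ(|p_Ĉ|²f_Ĉ), f_B' = ψ(p̄_Ĉ·f_B·(1 − (α/â₀(f_A))f_A)·p_A), and, for any 0 < α' < 2â₀(f_A')/‖f_A'‖_∞, f_Ĉ' = f_C' + (α'|f_B'|²/â₀(f_A'))(2 − (α'/â₀(f_A'))f_A'). Then: f_A'(0) = 0 and f_A'(θ) > 0 for all θ ∈ (0,2π); limsup_{θ→0} f_A(θ)/f_A'(θ) is finite and strictly positive; f_C'(θ) ≥ 0 for all θ; and limsup_{θ→0} f_Ĉ(θ)/f_Ĉ'(θ) < ∞. -/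
open Matrix Filter Set
open scoped Real Topology ComplexConjugate ComplexOrder

noncomputable section

section Helpers

open Filter Set

lemma trig_analytic {f : ℝ → ℂ} (hf : ∃ z, IsTrigPolyDeg z f) (x : ℝ) : AnalyticAt ℝ f x := by
  obtain ⟨z, c, hc⟩ := hf
  have : f = fun θ : ℝ => ∑ j ∈ Finset.Icc (-(z : ℤ)) (z : ℤ),
      c j * Complex.exp (Complex.I * (j : ℂ) * (θ : ℂ)) := funext hc
  rw [this]
  apply Finset.analyticAt_fun_sum
  intro j _
  apply AnalyticAt.mul analyticAt_const
  have h1 : AnalyticAt ℝ (fun θ : ℝ => Complex.I * (j:ℂ) * (θ:ℂ)) x := by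
    apply AnalyticAt.mul analyticAt_const
    exact Complex.ofRealCLM.analyticAt x
  exact (analyticAt_cexp.restrictScalars).comp h1

lemma trig_periodic_s11 {f : ℝ → ℂ} (hf : ∃ z, IsTrigPolyDeg z f) :
    Function.Periodic f (2 * Real.pi) := by
  obtain ⟨z, c, hc⟩ := hf
  intro θ
  rw [hc, hc]
  apply Finset.sum_congr rfl
  intro j _
  congr 1
  rw [Complex.ofReal_add, mul_add, Complex.exp_add]
  have : Complex.exp (Complex.I * (j:ℂ) * ((2:ℝ) * Real.pi : ℝ)) = 1 := by
    rw [show Complex.I * (j:ℂ) * (((2:ℝ) * Real.pi : ℝ):ℂ) = (j:ℤ) * (2 * Real.pi * Complex.I) by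
      push_cast; ring]
    exact Complex.exp_int_mul_two_pi_mul_I j
  rw [this, mul_one]

lemma le_supnorm {f : ℝ → ℝ} (hc : Continuous f) (hp : Function.Periodic f (2 * Real.pi)) (θ : ℝ) :
    |f θ| ≤ supnorm f := by
  have h2π : (0:ℝ) < 2 * Real.pi := by positivity
  have hbdd : BddAbove ((fun θ => |f θ|) '' Set.Ico 0 (2 * Real.pi)) := by
    have : IsCompact ((fun θ => |f θ|) '' Set.Icc 0 (2 * Real.pi)) :=
      (isCompact_Icc).image (hc.abs)
    exact this.bddAbove.mono (Set.image_mono Set.Ico_subset_Icc_self)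
  have hmem : toIcoMod h2π 0 θ ∈ Set.Ico (0:ℝ) (2 * Real.pi) := by
    simpa using toIcoMod_mem_Ico h2π 0 θ
  have heq : f (toIcoMod h2π 0 θ) = f θ := by
    rw [toIcoMod]
    simpa using hp.sub_zsmul_eq (toIcoDiv h2π 0 θ) (x := θ)
  calc |f θ| = |f (toIcoMod h2π 0 θ)| := by rw [heq]
    _ ≤ supnorm f := le_csSup hbdd ⟨_, hmem, rfl⟩

lemma supnorm_pos {f : ℝ → ℝ} (hc : Continuous f) {θ₀ : ℝ}
    (hθ₀ : θ₀ ∈ Set.Ico 0 (2*Real.pi)) (h : f θ₀ ≠ 0) : 0 < supnorm f := by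
  have hbdd : BddAbove ((fun θ => |f θ|) '' Set.Ico 0 (2 * Real.pi)) := by
    have : IsCompact ((fun θ => |f θ|) '' Set.Icc 0 (2 * Real.pi)) :=
      (isCompact_Icc).image (hc.abs)
    exact this.bddAbove.mono (Set.image_mono Set.Ico_subset_Icc_self)
  calc (0:ℝ) < |f θ₀| := abs_pos.mpr h
    _ ≤ supnorm f := le_csSup hbdd ⟨_, hθ₀, rfl⟩

lemma a0_pos {f : ℝ → ℝ} (hc : Continuous f) (hnn : ∀ θ, 0 ≤ f θ)
    (hpos : ∀ θ ∈ Set.Ioo (0:ℝ) (2 * Real.pi), 0 < f θ) : 0 < a0 f := by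
  have hpi := Real.pi_pos
  have hint : ∀ a b : ℝ, IntervalIntegrable f MeasureTheory.volume a b :=
    fun a b => hc.intervalIntegrable a b
  have hsplit : (∫ θ in (-Real.pi)..(Real.pi/2), f θ) + (∫ θ in (Real.pi/2)..Real.pi, f θ)
      = ∫ θ in (-Real.pi)..Real.pi, f θ :=
    intervalIntegral.integral_add_adjacent_intervals (hint _ _) (hint _ _)
  have h1 : 0 ≤ ∫ θ in (-Real.pi)..(Real.pi/2), f θ :=
    intervalIntegral.integral_nonneg (by linarith) (fun x _ => hnn x)
  have h2 : 0 < ∫ θ in (Real.pi/2)..Real.pi, f θ := by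
    apply intervalIntegral.intervalIntegral_pos_of_pos_on (hint _ _)
    · intro x hx
      exact hpos x ⟨by linarith [hx.1], by linarith [hx.2]⟩
    · linarith
  have h3 : 0 < ∫ θ in (-Real.pi)..Real.pi, f θ := by rw [← hsplit]; linarith
  have h4 : 0 < (1 / (2 * Real.pi)) := by positivity
  unfold a0; positivity

lemma order_decomp {f : ℝ → ℝ} (hf : AnalyticAt ℝ f 0)
    (hpos : ∀ᶠ θ in 𝓝[≠] (0:ℝ), 0 < f θ) :
    ∃ (n : ℕ) (u : ℝ → ℝ), AnalyticAt ℝ u 0 ∧ 0 < u 0 ∧ ∀ᶠ θ in 𝓝 (0:ℝ), f θ = θ ^ n * u θ := by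
  have hne : analyticOrderAt f 0 ≠ ⊤ := by
    intro h
    have h' := analyticOrderAt_eq_top.mp h
    have : ∀ᶠ θ in 𝓝[≠] (0:ℝ), f θ = 0 := nhdsWithin_le_nhds h'
    obtain ⟨θ, h1, h2⟩ := (hpos.and this).exists
    exact absurd h2.symm (ne_of_lt h1)
  lift analyticOrderAt f 0 to ℕ using hne with n hn
  obtain ⟨u, hu, hu0, heq⟩ := (hf.analyticOrderAt_eq_natCast (n := n)).mp hn.symm
  refine ⟨n, u, hu, ?_, by simpa using heq⟩
  rcases lt_or_gt_of_ne hu0 with hneg | hpos'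
  · exfalso
    have hu_cont : ContinuousAt u 0 := hu.continuousAt
    have hlt : ∀ᶠ θ in 𝓝 (0:ℝ), u θ < 0 := hu_cont.eventually_lt_const hneg
    have h3 : ∀ᶠ θ in 𝓝[>] (0:ℝ), (0:ℝ) < f θ ∧ u θ < 0 ∧ f θ = (θ - 0) ^ n • u θ ∧ 0 < θ := by
      filter_upwards [nhdsWithin_le_nhds (heq.and hlt),
        nhdsWithin_mono 0 (fun x hx => ne_of_gt hx : Ioi (0:ℝ) ⊆ {0}ᶜ) hpos, self_mem_nhdsWithin]
        with θ h1 h2 h3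
      exact ⟨h2, h1.2, h1.1, h3⟩
    obtain ⟨θ, hfθ, huθ, heqθ, hθ⟩ := h3.exists
    simp only [sub_zero, smul_eq_mul] at heqθ
    nlinarith [pow_pos hθ n]
  · exact hpos'

lemma normsq_analytic {g : ℝ → ℂ} (hg : ∀ x, AnalyticAt ℝ g x) (x : ℝ) :
    AnalyticAt ℝ (fun θ => ‖g θ‖^2) x := by
  have he : (fun θ => ‖g θ‖^2) = fun θ => (g θ).re*(g θ).re + (g θ).im*(g θ).im := by
    funext θ
    rw [Complex.sq_norm, Complex.normSq_apply]
  rw [he]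
  have hre : AnalyticAt ℝ (fun θ => (g θ).re) x := (Complex.reCLM.analyticAt _).comp (hg x)
  have him : AnalyticAt ℝ (fun θ => (g θ).im) x := (Complex.imCLM.analyticAt _).comp (hg x)
  exact (hre.mul hre).add (him.mul him)

lemma analytic_half {E : Type*} [NormedAddCommGroup E] [NormedSpace ℝ E] {g : ℝ → E}
    (hg : ∀ x, AnalyticAt ℝ g x) (c : ℝ) (x : ℝ) :
    AnalyticAt ℝ (fun θ => g (θ/2 + c)) x := by
  have ha : AnalyticAt ℝ (fun θ : ℝ => θ/2 + c) x := by
    have : (fun θ : ℝ => θ/2 + c) = fun θ : ℝ => θ * (1/2) + c := by funext θ; ring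
    rw [this]
    exact (analyticAt_id.mul analyticAt_const).add analyticAt_const
  exact (hg _).comp ha

lemma half_tendsto : Filter.Tendsto (fun θ : ℝ => θ/2) (𝓝[≠] (0:ℝ)) (𝓝[≠] (0:ℝ)) := by
  apply Filter.tendsto_inf.mpr
  constructor
  · have h0 : Filter.Tendsto (fun θ : ℝ => θ/2) (𝓝 (0:ℝ)) (𝓝 ((0:ℝ)/2)) :=
      (continuous_id.div_const 2).tendsto 0
    exact (by simpa using h0 : Filter.Tendsto (fun θ : ℝ => θ/2) (𝓝 (0:ℝ)) (𝓝 (0:ℝ))).mono_left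
      nhdsWithin_le_nhds
  · refine Filter.Tendsto.mono_left ?_ (inf_le_right (a := 𝓝 (0:ℝ)))
    refine Filter.tendsto_principal_principal.mpr (fun θ hθ => ?_)
    simp only [Set.mem_compl_iff, Set.mem_singleton_iff] at *
    exact div_ne_zero hθ two_ne_zero

end Helpers
section Helpers2
open Filter Set

lemma sandwich_pow_eq {k m : ℕ} {c₁ c₂ L : ℝ} (hc₁ : 0 < c₁) (hL : 0 < L) {w : ℝ → ℝ}
    (hw : Filter.Tendsto w (𝓝[>] (0:ℝ)) (𝓝 L))
    (h : ∀ᶠ θ in 𝓝[>] (0:ℝ), c₁ * θ^m ≤ θ^k * w θ ∧ θ^k * w θ ≤ c₂ * θ^m) : k = m := by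
  by_contra hne
  have hpos : ∀ᶠ θ in 𝓝[>] (0:ℝ), 0 < θ := self_mem_nhdsWithin
  rcases lt_or_gt_of_ne hne with hlt | hgt
  · -- k < m : w θ ≤ c₂ θ^(m-k) → 0, but w → L > 0
    have hev : ∀ᶠ θ in 𝓝[>] (0:ℝ), w θ ≤ c₂ * θ^(m-k) := by
      filter_upwards [h, hpos] with θ h2 hθ
      have hθk : 0 < θ^k := pow_pos hθ k
      have hsplit : θ^m = θ^k * θ^(m-k) := by rw [← pow_add]; congr 1; omega
      have h2' : θ^k * w θ ≤ θ^k * (c₂ * θ^(m-k)) := by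
        calc θ^k * w θ ≤ c₂ * θ^m := h2.2
          _ = θ^k * (c₂ * θ^(m-k)) := by rw [hsplit]; ring
      exact (mul_le_mul_iff_right₀ hθk).mp h2'
    have htend : Filter.Tendsto (fun θ:ℝ => c₂ * θ^(m-k)) (𝓝[>] (0:ℝ)) (𝓝 0) := by
      have h0 : Filter.Tendsto (fun θ:ℝ => θ^(m-k)) (𝓝 0) (𝓝 ((0:ℝ)^(m-k))) :=
        (continuous_pow _).tendsto 0
      rw [zero_pow (by omega : m - k ≠ 0)] at h0
      simpa using (h0.const_mul c₂).mono_left nhdsWithin_le_nhds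
    have := le_of_tendsto_of_tendsto hw htend hev
    linarith
  · -- m < k : c₁ ≤ θ^(k-m) * w θ → 0
    have hev : ∀ᶠ θ in 𝓝[>] (0:ℝ), c₁ ≤ θ^(k-m) * w θ := by
      filter_upwards [h, hpos] with θ h2 hθ
      have hθm : 0 < θ^m := pow_pos hθ m
      have hsplit : θ^k = θ^m * θ^(k-m) := by rw [← pow_add]; congr 1; omega
      have h2' : θ^m * c₁ ≤ θ^m * (θ^(k-m) * w θ) := by
        calc θ^m * c₁ = c₁ * θ^m := by ring
          _ ≤ θ^k * w θ := h2.1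
          _ = θ^m * (θ^(k-m) * w θ) := by rw [hsplit]; ring
      exact (mul_le_mul_iff_right₀ hθm).mp h2'
    have htend : Filter.Tendsto (fun θ:ℝ => θ^(k-m) * w θ) (𝓝[>] (0:ℝ)) (𝓝 (0 * L)) := by
      have h0 : Filter.Tendsto (fun θ:ℝ => θ^(k-m)) (𝓝 0) (𝓝 ((0:ℝ)^(k-m))) :=
        (continuous_pow _).tendsto 0
      rw [zero_pow (by omega : k - m ≠ 0)] at h0
      exact (h0.mono_left nhdsWithin_le_nhds).mul hw
    rw [zero_mul] at htend
    have := le_of_tendsto_of_tendsto tendsto_const_nhds htend hev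
    linarith

end Helpers2
set_option maxHeartbeats 2000000 in
/-- properties of the coarse symbols `f_A'`, `f_C'` and `f_Ĉ'`
(Lemma A.2 in the paper). -/
theorem stmt11 (fA fC : ℝ → ℝ) (fB pA pC : ℝ → ℂ) (α : ℝ)
    (hfA : ∃ z, IsTrigPolyDeg z (fun θ => (fA θ : ℂ)))
    (hfAnn : ∀ θ : ℝ, 0 ≤ fA θ)
    (hfA0 : fA 0 = 0)
    (hfApos : ∀ θ ∈ Set.Ioo (0 : ℝ) (2 * Real.pi), 0 < fA θ)
    (hfC : ∃ z, IsTrigPolyDeg z (fun θ => (fC θ : ℂ)))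
    (hfCnn : ∀ θ : ℝ, 0 ≤ fC θ)
    (hfB : ∃ z, IsTrigPolyDeg z fB)
    (hfB0 : fB 0 = 0)
    (hfBne : ∀ θ ∈ Set.Ioo (0 : ℝ) (2 * Real.pi), fB θ ≠ 0)
    (hfBA : Filter.IsBoundedUnder (· ≤ ·) (𝓝[≠] (0 : ℝ)) (fun θ => ‖fB θ‖ ^ 2 / fA θ))
    (hα0 : 0 < α) (hα : α < 2 * a0 fA / supnorm fA)
    (hpA : ∃ z, IsTrigPolyDeg z pA) (hpC : ∃ z, IsTrigPolyDeg z pC)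
    (h1 : ∀ θ : ℝ, 0 < ‖pA θ‖ ^ 2 + ‖pA (θ + Real.pi)‖ ^ 2)
    (h2 : ∀ θ : ℝ, 0 < ‖pC θ‖ ^ 2 + ‖pC (θ + Real.pi)‖ ^ 2)
    (hpA2 : Filter.IsBoundedUnder (· ≤ ·) (𝓝[≠] (0 : ℝ))
      (fun θ => ‖pA (θ + Real.pi)‖ ^ 2 / fA θ))
    (fA' fChat fC' : ℝ → ℝ) (fB' : ℝ → ℂ)
    (hfA' : ∀ θ : ℝ, fA' θ = (1 / 2) *
      (‖pA (θ / 2)‖ ^ 2 * fA (θ / 2) + ‖pA (θ / 2 + Real.pi)‖ ^ 2 * fA (θ / 2 + Real.pi)))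
    (hfChat : ∀ θ : ℝ, fChat θ =
      fC θ + α * ‖fB θ‖ ^ 2 / a0 fA * (2 - α / a0 fA * fA θ))
    (hfC' : ∀ θ : ℝ, fC' θ = (1 / 2) *
      (‖pC (θ / 2)‖ ^ 2 * fChat (θ / 2) + ‖pC (θ / 2 + Real.pi)‖ ^ 2 * fChat (θ / 2 + Real.pi)))
    (hfB' : ∀ θ : ℝ, fB' θ = (1 / 2) *
      ((starRingEnd ℂ) (pC (θ / 2)) * fB (θ / 2) *
          (1 - ((α / a0 fA * fA (θ / 2) : ℝ) : ℂ)) * pA (θ / 2) +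
        (starRingEnd ℂ) (pC (θ / 2 + Real.pi)) * fB (θ / 2 + Real.pi) *
          (1 - ((α / a0 fA * fA (θ / 2 + Real.pi) : ℝ) : ℂ)) * pA (θ / 2 + Real.pi))) :
    (fA' 0 = 0 ∧ ∀ θ ∈ Set.Ioo (0 : ℝ) (2 * Real.pi), 0 < fA' θ) ∧
      (∃ c : ℝ, 0 < c ∧
        Filter.limsup (fun θ => fA θ / fA' θ) (𝓝[≠] (0 : ℝ)) = c ∧
        Filter.IsBoundedUnder (· ≤ ·) (𝓝[≠] (0 : ℝ)) (fun θ => fA θ / fA' θ)) ∧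
      (∀ θ : ℝ, 0 ≤ fC' θ) ∧
      (∀ α' : ℝ, 0 < α' → α' < 2 * a0 fA' / supnorm fA' →
        Filter.IsBoundedUnder (· ≤ ·) (𝓝[≠] (0 : ℝ)) (fun θ =>
          fChat θ / (fC' θ + α' * ‖fB' θ‖ ^ 2 / a0 fA' * (2 - α' / a0 fA' * fA' θ)))) := by
  have hπ := Real.pi_pos
  -- analyticity / continuity / periodicity of the data
  have hfA_an : ∀ x, AnalyticAt ℝ fA x := by
    intro x
    have he : fA = fun θ => ((fA θ : ℂ)).re := by funext θ; simp
    rw [he]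
    exact (Complex.reCLM.analyticAt _).comp (trig_analytic hfA x)
  have hfC_an : ∀ x, AnalyticAt ℝ fC x := by
    intro x
    have he : fC = fun θ => ((fC θ : ℂ)).re := by funext θ; simp
    rw [he]
    exact (Complex.reCLM.analyticAt _).comp (trig_analytic hfC x)
  have hfB_an : ∀ x, AnalyticAt ℝ fB x := trig_analytic hfB
  have hpA_an : ∀ x, AnalyticAt ℝ pA x := trig_analytic hpA
  have hpC_an : ∀ x, AnalyticAt ℝ pC x := trig_analytic hpC
  have hfA_cont : Continuous fA := continuous_iff_continuousAt.mpr fun x => (hfA_an x).continuousAt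
  have hfC_cont : Continuous fC := continuous_iff_continuousAt.mpr fun x => (hfC_an x).continuousAt
  have hfB_cont : Continuous fB := continuous_iff_continuousAt.mpr fun x => (hfB_an x).continuousAt
  have hpA_cont : Continuous pA := continuous_iff_continuousAt.mpr fun x => (hpA_an x).continuousAt
  have hpC_cont : Continuous pC := continuous_iff_continuousAt.mpr fun x => (hpC_an x).continuousAt
  have hfA_per : Function.Periodic fA (2 * Real.pi) := by
    intro θ
    have := trig_periodic_s11 hfA θ
    exact_mod_cast this
  have hfB_per : Function.Periodic fB (2 * Real.pi) := trig_periodic_s11 hfB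
  have hpA_per : Function.Periodic pA (2 * Real.pi) := trig_periodic_s11 hpA
  -- global bounds for fA
  have ha0A : 0 < a0 fA := a0_pos hfA_cont hfAnn hfApos
  have hfAle : ∀ θ, fA θ ≤ supnorm fA :=
    fun θ => (le_abs_self _).trans (le_supnorm hfA_cont hfA_per θ)
  have hSA : 0 < supnorm fA :=
    supnorm_pos hfA_cont ⟨hπ.le, by linarith⟩ (ne_of_gt (hfApos Real.pi ⟨hπ, by linarith⟩))
  have hδ : 0 < 2 - α / a0 fA * supnorm fA := by
    have h1' : α * supnorm fA < 2 * a0 fA := (lt_div_iff₀ hSA).mp hα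
    have h2' : α / a0 fA * supnorm fA < 2 := by
      rw [div_mul_eq_mul_div, div_lt_iff₀ ha0A]; linarith
    linarith
  have hfact : ∀ θ, 2 - α / a0 fA * supnorm fA ≤ 2 - α / a0 fA * fA θ ∧
      2 - α / a0 fA * fA θ ≤ 2 := by
    intro θ
    have h1' : α / a0 fA * fA θ ≤ α / a0 fA * supnorm fA :=
      mul_le_mul_of_nonneg_left (hfAle θ) (by positivity)
    have h2' : 0 ≤ α / a0 fA * fA θ :=
      mul_nonneg (div_nonneg hα0.le ha0A.le) (hfAnn θ)
    exact ⟨by linarith, by linarith⟩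
  -- bounds for fChat
  have hfChat_ge : ∀ θ,
      fC θ + α / a0 fA * (2 - α / a0 fA * supnorm fA) * ‖fB θ‖^2 ≤ fChat θ := by
    intro θ
    rw [hfChat θ]
    have h1' := (hfact θ).1
    have hb : (0:ℝ) ≤ ‖fB θ‖^2 := sq_nonneg _
    have hd : (0:ℝ) ≤ α / a0 fA := div_nonneg hα0.le ha0A.le
    have key := mul_le_mul_of_nonneg_left h1' (mul_nonneg hd hb)
    simp only [div_eq_mul_inv] at *
    nlinarith [key]
  have hfChat_le : ∀ θ, fChat θ ≤ fC θ + α / a0 fA * 2 * ‖fB θ‖^2 := by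
    intro θ
    rw [hfChat θ]
    have h1' := (hfact θ).2
    have hb : (0:ℝ) ≤ ‖fB θ‖^2 := sq_nonneg _
    have hd : (0:ℝ) ≤ α / a0 fA := div_nonneg hα0.le ha0A.le
    have key := mul_le_mul_of_nonneg_left h1' (mul_nonneg hd hb)
    simp only [div_eq_mul_inv] at *
    nlinarith [key]
  have hfChat_nn : ∀ θ, 0 ≤ fChat θ := by
    intro θ
    have := hfChat_ge θ
    have hb : (0:ℝ) ≤ ‖fB θ‖^2 := sq_nonneg _
    have hd : (0:ℝ) ≤ α / a0 fA := div_nonneg hα0.le ha0A.le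
    nlinarith [hfCnn θ, mul_nonneg (mul_nonneg hd hδ.le) hb]
  -- punctured positivity of fA
  have hfA_punct : ∀ᶠ θ in 𝓝[≠] (0:ℝ), 0 < fA θ := by
    have hmem : Set.Ioo (-(2*Real.pi)) (2*Real.pi) ∈ 𝓝 (0:ℝ) :=
      Ioo_mem_nhds (by linarith) (by linarith)
    filter_upwards [nhdsWithin_le_nhds hmem, self_mem_nhdsWithin] with θ ha hb
    simp only [Set.mem_compl_iff, Set.mem_singleton_iff] at hb
    rcases lt_or_gt_of_ne hb with hneg | hposi
    · have he : fA θ = fA (θ + 2*Real.pi) := (hfA_per θ).symm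
      rw [he]
      exact hfApos _ ⟨by linarith [ha.1], by linarith⟩
    · exact hfApos _ ⟨hposi, ha.2⟩
  -- pA π = 0
  have hpAπ : pA Real.pi = 0 := by
    obtain ⟨M, hM⟩ := hpA2
    rw [Filter.eventually_map] at hM
    have hev : ∀ᶠ θ in 𝓝[≠] (0:ℝ), ‖pA (θ + Real.pi)‖^2 ≤ M * fA θ := by
      filter_upwards [hM, hfA_punct] with θ ha hb
      exact (div_le_iff₀ hb).mp ha
    have ht1 : Filter.Tendsto (fun θ : ℝ => ‖pA (θ + Real.pi)‖^2) (𝓝[≠] (0:ℝ))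
        (𝓝 (‖pA ((0:ℝ) + Real.pi)‖^2)) := by
      have hc : Continuous (fun θ : ℝ => ‖pA (θ + Real.pi)‖^2) :=
        ((hpA_cont.comp (continuous_id.add continuous_const)).norm.pow 2)
      exact (hc.tendsto 0).mono_left nhdsWithin_le_nhds
    have ht2 : Filter.Tendsto (fun θ : ℝ => M * fA θ) (𝓝[≠] (0:ℝ)) (𝓝 (M * fA 0)) :=
      ((hfA_cont.tendsto 0).const_mul M).mono_left nhdsWithin_le_nhds
    have hle := le_of_tendsto_of_tendsto ht1 ht2 hev
    rw [hfA0, mul_zero, zero_add] at hle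
    have h0 : ‖pA Real.pi‖^2 = 0 := le_antisymm hle (sq_nonneg _)
    have : ‖pA Real.pi‖ = 0 := by nlinarith [norm_nonneg (pA Real.pi)]
    exact norm_eq_zero.mp this
  have hpA0 : 0 < ‖pA 0‖^2 := by
    have := h1 0
    rw [zero_add, hpAπ] at this
    simpa using this
  -- Part 1
  have key_pos : ∀ a b x y : ℝ, 0 ≤ a → 0 ≤ b → 0 < x → 0 < y → 0 < a + b →
      0 < (1/2) * (a * x + b * y) := by
    intro a b x y ha hb hx hy hab
    rcases eq_or_lt_of_le ha with h | h
    · have hb' : 0 < b := by linarith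
      nlinarith [mul_pos hb' hy, mul_nonneg ha hx.le]
    · nlinarith [mul_pos h hx, mul_nonneg hb hy.le]
  have part1b : ∀ θ ∈ Set.Ioo (0:ℝ) (2*Real.pi), 0 < fA' θ := by
    intro θ hθ
    rw [hfA' θ]
    exact key_pos _ _ _ _ (sq_nonneg _) (sq_nonneg _)
      (hfApos _ ⟨by linarith [hθ.1], by linarith [hθ.2]⟩)
      (hfApos _ ⟨by linarith [hθ.1], by linarith [hθ.2]⟩)
      (h1 _)
  have part1a : fA' 0 = 0 := by
    have := hfA' 0
    rw [show (0:ℝ)/2 = 0 by norm_num, zero_add, hfA0, hpAπ] at this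
    simpa using this
  -- punctured positivity of fA'
  have hfA'_punct : ∀ᶠ θ in 𝓝[≠] (0:ℝ), 0 < fA' θ := by
    have hmem : Set.Ioo (-(2*Real.pi)) (2*Real.pi) ∈ 𝓝 (0:ℝ) :=
      Ioo_mem_nhds (by linarith) (by linarith)
    filter_upwards [nhdsWithin_le_nhds hmem, self_mem_nhdsWithin] with θ ha hb
    simp only [Set.mem_compl_iff, Set.mem_singleton_iff] at hb
    rcases lt_or_gt_of_ne hb with hneg | hposi
    · rw [hfA' θ]
      have hx : 0 < fA (θ/2) := by
        have he : fA (θ/2) = fA (θ/2 + 2*Real.pi) := (hfA_per _).symm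
        rw [he]
        exact hfApos _ ⟨by linarith [ha.1], by linarith⟩
      have hy : 0 < fA (θ/2 + Real.pi) :=
        hfApos _ ⟨by linarith [ha.1], by linarith⟩
      exact key_pos _ _ _ _ (sq_nonneg _) (sq_nonneg _) hx hy (h1 _)
    · exact part1b θ ⟨hposi, ha.2⟩
  -- analyticity of fA'
  have hfA'_an : ∀ x, AnalyticAt ℝ fA' x := by
    intro x
    have he : fA' = fun θ => (1/2) * (‖pA (θ/2)‖^2 * fA (θ/2) +
        ‖pA (θ/2 + Real.pi)‖^2 * fA (θ/2 + Real.pi)) := funext hfA'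
    rw [he]
    have hnorm : ∀ y, AnalyticAt ℝ (fun t => ‖pA t‖^2) y := normsq_analytic hpA_an
    have c1 : AnalyticAt ℝ (fun θ : ℝ => ‖pA (θ/2)‖^2) x := by
      have := analytic_half (g := fun t => ‖pA t‖^2) hnorm 0 x
      simpa using this
    have c2 : AnalyticAt ℝ (fun θ : ℝ => fA (θ/2)) x := by
      have := analytic_half hfA_an 0 x
      simpa using this
    have c3 : AnalyticAt ℝ (fun θ : ℝ => ‖pA (θ/2 + Real.pi)‖^2) x :=
      analytic_half (g := fun t => ‖pA t‖^2) hnorm Real.pi x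
    have c4 : AnalyticAt ℝ (fun θ : ℝ => fA (θ/2 + Real.pi)) x :=
      analytic_half hfA_an Real.pi x
    exact analyticAt_const.mul ((c1.mul c2).add (c3.mul c4))
  have hfA'_cont : Continuous fA' :=
    continuous_iff_continuousAt.mpr fun x => (hfA'_an x).continuousAt
  -- Part 2
  obtain ⟨m, u, hu_an, hu0, hueq⟩ := order_decomp (hfA_an 0) hfA_punct
  obtain ⟨k, v, hv_an, hv0, hveq⟩ := order_decomp (hfA'_an 0) hfA'_punct
  obtain ⟨M, hM⟩ := hpA2
  rw [Filter.eventually_map] at hM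
  have hφ0 : Filter.Tendsto (fun θ : ℝ => θ/2) (𝓝[≠] (0:ℝ)) (𝓝 (0:ℝ)) :=
    half_tendsto.mono_right nhdsWithin_le_nhds
  have hpAsq_tend : Filter.Tendsto (fun θ : ℝ => ‖pA (θ/2)‖^2) (𝓝[≠] (0:ℝ)) (𝓝 (‖pA 0‖^2)) := by
    have hc : Filter.Tendsto (fun t : ℝ => ‖pA t‖^2) (𝓝 (0:ℝ)) (𝓝 (‖pA 0‖^2)) :=
      ((hpA_cont.norm.pow 2).tendsto 0)
    exact hc.comp hφ0
  have e_half_pos : ∀ᶠ θ in 𝓝[≠] (0:ℝ), 0 < fA (θ/2) := half_tendsto.eventually hfA_punct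
  have e_bd : ∀ᶠ θ in 𝓝[≠] (0:ℝ), ‖pA (θ/2 + Real.pi)‖^2 ≤ M * fA (θ/2) := by
    filter_upwards [half_tendsto.eventually hM, e_half_pos] with θ ha hb
    exact (div_le_iff₀ hb).mp ha
  have e_pAub : ∀ᶠ θ in 𝓝[≠] (0:ℝ), ‖pA (θ/2)‖^2 < ‖pA 0‖^2 + 1 :=
    hpAsq_tend.eventually_lt_const (by linarith)
  have e_pAlb : ∀ᶠ θ in 𝓝[≠] (0:ℝ), ‖pA 0‖^2/2 < ‖pA (θ/2)‖^2 :=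
    hpAsq_tend.eventually_const_lt (by linarith)
  set c₁ : ℝ := ‖pA 0‖^2/4 with hc₁def
  have hc₁ : 0 < c₁ := by rw [hc₁def]; linarith
  set c₂ : ℝ := (1/2) * ((‖pA 0‖^2 + 1) + M * supnorm fA) with hc₂def
  have e_upper : ∀ᶠ θ in 𝓝[≠] (0:ℝ), fA' θ ≤ c₂ * fA (θ/2) := by
    filter_upwards [e_bd, e_pAub, e_half_pos] with θ ha hb hc
    rw [hfA' θ, hc₂def]
    have hy0 : 0 ≤ fA (θ/2 + Real.pi) := hfAnn _
    have hyS : fA (θ/2 + Real.pi) ≤ supnorm fA := hfAle _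
    have hb0 : 0 ≤ ‖pA (θ/2 + Real.pi)‖^2 := sq_nonneg _
    have hMx : 0 ≤ M * fA (θ/2) := le_trans hb0 ha
    nlinarith [mul_le_mul ha hyS hy0 hMx, mul_le_mul_of_nonneg_right hb.le hc.le]
  have e_lower : ∀ᶠ θ in 𝓝[≠] (0:ℝ), c₁ * fA (θ/2) ≤ fA' θ := by
    filter_upwards [e_pAlb, e_half_pos] with θ hb hc
    rw [hfA' θ, hc₁def]
    have hz : 0 ≤ ‖pA (θ/2 + Real.pi)‖^2 * fA (θ/2 + Real.pi) :=
      mul_nonneg (sq_nonneg _) (hfAnn _)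
    nlinarith [mul_le_mul_of_nonneg_right hb.le hc.le]
  have hc₂pos : 0 < c₂ := by
    obtain ⟨θ, hx, hl, hu'⟩ := (e_half_pos.and (e_lower.and e_upper)).exists
    nlinarith
  -- e_u, e_v, bounds on u and v
  have e_u : ∀ᶠ θ in 𝓝[≠] (0:ℝ), fA (θ/2) = (θ/2)^m * u (θ/2) := hφ0.eventually hueq
  have e_v : ∀ᶠ θ in 𝓝[≠] (0:ℝ), fA' θ = θ^k * v θ := nhdsWithin_le_nhds hveq
  have hu_tend : Filter.Tendsto (fun θ : ℝ => u (θ/2)) (𝓝[≠] (0:ℝ)) (𝓝 (u 0)) :=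
    (hu_an.continuousAt.tendsto).comp hφ0
  have e_ulb : ∀ᶠ θ in 𝓝[≠] (0:ℝ), u 0/2 < u (θ/2) := hu_tend.eventually_const_lt (by linarith)
  have e_uub : ∀ᶠ θ in 𝓝[≠] (0:ℝ), u (θ/2) < 2 * u 0 := hu_tend.eventually_lt_const (by linarith)
  have hsub : 𝓝[>] (0:ℝ) ≤ 𝓝[≠] (0:ℝ) :=
    nhdsWithin_mono 0 (fun x hx => ne_of_gt hx)
  have hkm : k = m := by
    apply sandwich_pow_eq (c₁ := c₁ * (u 0/2) * (1/2)^m) (c₂ := c₂ * (2 * u 0) * (1/2)^m)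
      (L := v 0) (by positivity) hv0
      ((hv_an.continuousAt.tendsto).mono_left (hsub.trans nhdsWithin_le_nhds))
    have hall := (e_lower.and (e_upper.and (e_u.and (e_v.and (e_ulb.and e_uub)))))
    filter_upwards [hsub hall, self_mem_nhdsWithin] with θ hA hθ
    obtain ⟨hl, hup, hu', hv', hul, huu⟩ := hA
    have hθ' : (0:ℝ) < θ := hθ
    have hhalf : (θ/2)^m = θ^m * (1/2)^m := by
      rw [show θ/2 = θ * (1/2) by ring, mul_pow]
    rw [hu', hhalf] at hl hup
    rw [hv'] at hl hup
    have hpm : (0:ℝ) < θ^m := pow_pos hθ' m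
    have hhm : (0:ℝ) < (1/2:ℝ)^m := by positivity
    constructor
    · nlinarith [mul_nonneg (mul_pos hc₁ (mul_pos hpm hhm)).le
        (by linarith : (0:ℝ) ≤ u (θ/2) - u 0/2)]
    · nlinarith [mul_nonneg (mul_pos hc₂pos (mul_pos hpm hhm)).le
        (by linarith : (0:ℝ) ≤ 2 * u 0 - u (θ/2))]
  have hratio : Filter.Tendsto (fun θ => fA θ / fA' θ) (𝓝[≠] (0:ℝ)) (𝓝 (u 0 / v 0)) := by
    have htv : Filter.Tendsto (fun θ => u θ / v θ) (𝓝[≠] (0:ℝ)) (𝓝 (u 0 / v 0)) :=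
      ((hu_an.continuousAt.tendsto).div (hv_an.continuousAt.tendsto)
        (ne_of_gt hv0)).mono_left nhdsWithin_le_nhds
    apply htv.congr'
    filter_upwards [nhdsWithin_le_nhds hueq, nhdsWithin_le_nhds hveq, self_mem_nhdsWithin]
      with θ ha hb hc
    simp only [Set.mem_compl_iff, Set.mem_singleton_iff] at hc
    rw [ha, hb, hkm]
    exact (mul_div_mul_left _ _ (pow_ne_zero m hc)).symm
  -- Part 3
  have part3 : ∀ θ, 0 ≤ fC' θ := by
    intro θ
    rw [hfC' θ]
    have t1 : 0 ≤ ‖pC (θ/2)‖^2 * fChat (θ/2) := mul_nonneg (sq_nonneg _) (hfChat_nn _)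
    have t2 : 0 ≤ ‖pC (θ/2 + Real.pi)‖^2 * fChat (θ/2 + Real.pi) :=
      mul_nonneg (sq_nonneg _) (hfChat_nn _)
    linarith
  refine ⟨⟨part1a, part1b⟩,
    ⟨u 0 / v 0, div_pos hu0 hv0, hratio.limsup_eq, hratio.isBoundedUnder_le⟩, part3, ?_⟩
  -- Part 4
  intro α' hα'0 hα'
  set Dfun : ℝ → ℝ := fun θ => fC' θ + α' * ‖fB' θ‖ ^ 2 / a0 fA' * (2 - α' / a0 fA' * fA' θ)
    with hDdef
  clear_value Dfun
  suffices hbnd : Filter.IsBoundedUnder (· ≤ ·) (𝓝[≠] (0:ℝ)) (fun θ => fChat θ / Dfun θ) by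
    simpa only [hDdef] using hbnd
  have hfA'_nn : ∀ θ, 0 ≤ fA' θ := by
    intro θ
    rw [hfA' θ]
    have t1 : 0 ≤ ‖pA (θ/2)‖^2 * fA (θ/2) := mul_nonneg (sq_nonneg _) (hfAnn _)
    have t2 : 0 ≤ ‖pA (θ/2 + Real.pi)‖^2 * fA (θ/2 + Real.pi) :=
      mul_nonneg (sq_nonneg _) (hfAnn _)
    linarith
  have hfA'_per : Function.Periodic fA' (2 * Real.pi) := by
    intro θ
    rw [hfA' (θ + 2*Real.pi), hfA' θ]
    rw [show (θ + 2*Real.pi)/2 = θ/2 + Real.pi by ring]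
    rw [show θ/2 + Real.pi + Real.pi = θ/2 + 2*Real.pi by ring]
    rw [hpA_per (θ/2), hfA_per (θ/2)]
    ring
  have ha0' : 0 < a0 fA' := a0_pos hfA'_cont hfA'_nn part1b
  have hS' : 0 < supnorm fA' :=
    supnorm_pos hfA'_cont ⟨hπ.le, by linarith⟩ (ne_of_gt (part1b Real.pi ⟨hπ, by linarith⟩))
  have hfA'le : ∀ θ, fA' θ ≤ supnorm fA' :=
    fun θ => (le_abs_self _).trans (le_supnorm hfA'_cont hfA'_per θ)
  have hterm2_nn : ∀ θ, 0 ≤ α' * ‖fB' θ‖ ^ 2 / a0 fA' * (2 - α' / a0 fA' * fA' θ) := by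
    intro θ
    have hf1 : 0 ≤ 2 - α' / a0 fA' * fA' θ := by
      have hq1 : α' * supnorm fA' < 2 * a0 fA' := (lt_div_iff₀ hS').mp hα'
      have hq2 : α' / a0 fA' * fA' θ ≤ α' / a0 fA' * supnorm fA' :=
        mul_le_mul_of_nonneg_left (hfA'le θ) (div_nonneg hα'0.le ha0'.le)
      have hq3 : α' / a0 fA' * supnorm fA' < 2 := by
        rw [div_mul_eq_mul_div, div_lt_iff₀ ha0']; linarith
      linarith
    exact mul_nonneg (div_nonneg (mul_nonneg hα'0.le (sq_nonneg _)) ha0'.le) hf1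
  have hDnn : ∀ θ, 0 ≤ Dfun θ := by
    intro θ
    rw [hDdef]
    exact add_nonneg (part3 θ) (hterm2_nn θ)
  have hDge : ∀ θ, fC' θ ≤ Dfun θ := by
    intro θ
    rw [hDdef]
    exact le_add_of_nonneg_right (hterm2_nn θ)
  -- continuity
  have hhalfc : Continuous (fun θ : ℝ => θ/2) := continuous_id.div_const 2
  have hhalfπc : Continuous (fun θ : ℝ => θ/2 + Real.pi) := hhalfc.add continuous_const
  have hfChat_cont : Continuous fChat := by
    have he : fChat = fun θ => fC θ + α * ‖fB θ‖^2 / a0 fA * (2 - α / a0 fA * fA θ) :=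
      funext hfChat
    rw [he]
    exact hfC_cont.add (((continuous_const.mul (hfB_cont.norm.pow 2)).div_const _).mul
      (continuous_const.sub (continuous_const.mul hfA_cont)))
  have hfC'_cont : Continuous fC' := by
    have he : fC' = fun θ => (1/2) * (‖pC (θ/2)‖^2 * fChat (θ/2) +
        ‖pC (θ/2 + Real.pi)‖^2 * fChat (θ/2 + Real.pi)) := funext hfC'
    rw [he]
    exact continuous_const.mul
      ((((hpC_cont.comp hhalfc).norm.pow 2).mul (hfChat_cont.comp hhalfc)).add
        (((hpC_cont.comp hhalfπc).norm.pow 2).mul (hfChat_cont.comp hhalfπc)))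
  have hfB'_cont : Continuous fB' := by
    have he : fB' = fun θ => (1 / 2 : ℂ) *
      ((starRingEnd ℂ) (pC (θ / 2)) * fB (θ / 2) *
          (1 - ((α / a0 fA * fA (θ / 2) : ℝ) : ℂ)) * pA (θ / 2) +
        (starRingEnd ℂ) (pC (θ / 2 + Real.pi)) * fB (θ / 2 + Real.pi) *
          (1 - ((α / a0 fA * fA (θ / 2 + Real.pi) : ℝ) : ℂ)) * pA (θ / 2 + Real.pi)) :=
      funext hfB'
    rw [he]
    simp only [starRingEnd_apply]
    have hco : Continuous (fun t : ℝ => 1 - ((α / a0 fA * fA t : ℝ) : ℂ)) :=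
      continuous_const.sub (Complex.continuous_ofReal.comp (continuous_const.mul hfA_cont))
    refine continuous_const.mul (Continuous.add ?_ ?_)
    · exact ((((hpC_cont.comp hhalfc).star).mul (hfB_cont.comp hhalfc)).mul
        (hco.comp hhalfc)).mul (hpA_cont.comp hhalfc)
    · exact ((((hpC_cont.comp hhalfπc).star).mul (hfB_cont.comp hhalfπc)).mul
        (hco.comp hhalfπc)).mul (hpA_cont.comp hhalfπc)
  have hD_cont : Continuous Dfun := by
    rw [hDdef]
    exact hfC'_cont.add (((continuous_const.mul (hfB'_cont.norm.pow 2)).div_const _).mul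
      (continuous_const.sub (continuous_const.mul hfA'_cont)))
  have hfChatπ : 0 < fChat Real.pi := by
    have hge := hfChat_ge Real.pi
    have hBπ : fB Real.pi ≠ 0 := hfBne Real.pi ⟨hπ, by linarith⟩
    have hBπ2 : 0 < ‖fB Real.pi‖^2 := pow_pos (norm_pos_iff.mpr hBπ) 2
    nlinarith [hfCnn Real.pi, mul_pos (mul_pos (div_pos hα0 ha0A) hδ) hBπ2]
  by_cases hD0 : 0 < Dfun 0
  · refine ⟨(fChat 0 + 1)/(Dfun 0/2), ?_⟩
    rw [Filter.eventually_map]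
    have hnum : ∀ᶠ θ in 𝓝[≠] (0:ℝ), fChat θ < fChat 0 + 1 :=
      ((hfChat_cont.tendsto 0).mono_left nhdsWithin_le_nhds).eventually_lt_const (by linarith)
    have hden : ∀ᶠ θ in 𝓝[≠] (0:ℝ), Dfun 0/2 < Dfun θ :=
      ((hD_cont.tendsto 0).mono_left nhdsWithin_le_nhds).eventually_const_lt (by linarith)
    filter_upwards [hnum, hden] with θ ha hb
    exact div_le_div₀ (by linarith [hfChat_nn 0]) ha.le (by linarith) hb.le
  · have hD00 : Dfun 0 = 0 := le_antisymm (not_lt.mp hD0) (hDnn 0)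
    have hfC'0 : fC' 0 = 0 := by
      rw [hDdef] at hD00
      simp only at hD00
      linarith [part3 0, hterm2_nn 0]
    have hfC'0ex : (1/2) * (‖pC (0:ℝ)‖^2 * fChat 0 + ‖pC Real.pi‖^2 * fChat Real.pi) = 0 := by
      have h' := hfC' 0
      rw [show (0:ℝ)/2 = 0 by norm_num, zero_add] at h'
      linarith
    have ht1 : 0 ≤ ‖pC (0:ℝ)‖^2 * fChat 0 := mul_nonneg (sq_nonneg _) (hfChat_nn _)
    have ht2 : 0 ≤ ‖pC Real.pi‖^2 * fChat Real.pi := mul_nonneg (sq_nonneg _) (hfChat_nn _)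
    have hpCπ : ‖pC Real.pi‖^2 = 0 := by
      by_contra h
      have h3 : 0 < ‖pC Real.pi‖^2 := lt_of_le_of_ne (sq_nonneg _) (Ne.symm h)
      nlinarith [mul_pos h3 hfChatπ]
    have hpC0 : 0 < ‖pC (0:ℝ)‖^2 := by
      have h' := h2 0
      rw [zero_add] at h'
      linarith
    -- analysis of G = fC + ‖fB‖²
    have hG_an : AnalyticAt ℝ (fun θ => fC θ + ‖fB θ‖^2) 0 :=
      (hfC_an 0).add (normsq_analytic hfB_an 0)
    have hG_punct : ∀ᶠ θ in 𝓝[≠] (0:ℝ), 0 < fC θ + ‖fB θ‖^2 := by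
      have hmem : Set.Ioo (-(2*Real.pi)) (2*Real.pi) ∈ 𝓝 (0:ℝ) :=
        Ioo_mem_nhds (by linarith) (by linarith)
      filter_upwards [nhdsWithin_le_nhds hmem, self_mem_nhdsWithin] with θ ha hb
      simp only [Set.mem_compl_iff, Set.mem_singleton_iff] at hb
      have hBθ : fB θ ≠ 0 := by
        rcases lt_or_gt_of_ne hb with hneg | hposi
        · have he : fB θ = fB (θ + 2*Real.pi) := (hfB_per θ).symm
          rw [he]
          exact hfBne _ ⟨by linarith [ha.1], by linarith⟩
        · exact hfBne _ ⟨hposi, ha.2⟩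
      have hB2 : 0 < ‖fB θ‖^2 := pow_pos (norm_pos_iff.mpr hBθ) 2
      linarith [hfCnn θ]
    obtain ⟨k', g, hg_an, hg0, hgeq⟩ := order_decomp hG_an hG_punct
    have q1 : ∀ᶠ θ in 𝓝[≠] (0:ℝ), fC θ + ‖fB θ‖^2 = θ^k' * g θ := nhdsWithin_le_nhds hgeq
    have q2 : ∀ᶠ θ in 𝓝[≠] (0:ℝ), fC (θ/2) + ‖fB (θ/2)‖^2 = (θ/2)^k' * g (θ/2) :=
      hφ0.eventually hgeq
    have hg_tend0 : Filter.Tendsto g (𝓝[≠] (0:ℝ)) (𝓝 (g 0)) :=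
      (hg_an.continuousAt.tendsto).mono_left nhdsWithin_le_nhds
    have hg_tendh : Filter.Tendsto (fun θ : ℝ => g (θ/2)) (𝓝[≠] (0:ℝ)) (𝓝 (g 0)) :=
      (hg_an.continuousAt.tendsto).comp hφ0
    have q3 : ∀ᶠ θ in 𝓝[≠] (0:ℝ), g θ < 2 * g 0 := hg_tend0.eventually_lt_const (by linarith)
    have q4 : ∀ᶠ θ in 𝓝[≠] (0:ℝ), g 0/2 < g (θ/2) := hg_tendh.eventually_const_lt (by linarith)
    have q5 : ∀ᶠ θ in 𝓝[≠] (0:ℝ), 0 < fC (θ/2) + ‖fB (θ/2)‖^2 := half_tendsto.eventually hG_punct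
    have hpCsq_tend : Filter.Tendsto (fun θ : ℝ => ‖pC (θ/2)‖^2) (𝓝[≠] (0:ℝ)) (𝓝 (‖pC 0‖^2)) :=
      ((hpC_cont.norm.pow 2).tendsto 0).comp hφ0
    have q6 : ∀ᶠ θ in 𝓝[≠] (0:ℝ), ‖pC (0:ℝ)‖^2/2 < ‖pC (θ/2)‖^2 :=
      hpCsq_tend.eventually_const_lt (by linarith)
    -- numerator bound
    have hC1nn : (0:ℝ) ≤ 1 + α / a0 fA * 2 := by
      have := div_nonneg hα0.le ha0A.le; linarith
    have hC1 : ∀ θ, fChat θ ≤ (1 + α / a0 fA * 2) * (fC θ + ‖fB θ‖^2) := by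
      intro θ
      have h' := hfChat_le θ
      have hd : (0:ℝ) ≤ α / a0 fA := div_nonneg hα0.le ha0A.le
      nlinarith [hfCnn θ, sq_nonneg ‖fB θ‖, mul_nonneg hd (sq_nonneg ‖fB θ‖),
        mul_nonneg hd (hfCnn θ)]
    have hc2' : 0 < min 1 (α / a0 fA * (2 - α / a0 fA * supnorm fA)) :=
      lt_min one_pos (mul_pos (div_pos hα0 ha0A) hδ)
    have hChat_lb : ∀ θ, min 1 (α / a0 fA * (2 - α / a0 fA * supnorm fA)) * (fC θ + ‖fB θ‖^2)
        ≤ fChat θ := by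
      intro θ
      have h' := hfChat_ge θ
      have hm1 : min 1 (α / a0 fA * (2 - α / a0 fA * supnorm fA)) ≤ 1 := min_le_left _ _
      have hm2 : min 1 (α / a0 fA * (2 - α / a0 fA * supnorm fA)) ≤
          α / a0 fA * (2 - α / a0 fA * supnorm fA) := min_le_right _ _
      nlinarith [mul_le_mul_of_nonneg_right hm1 (hfCnn θ),
        mul_le_mul_of_nonneg_right hm2 (sq_nonneg ‖fB θ‖)]
    have hc3 : 0 < ‖pC (0:ℝ)‖^2/2 * (1/2) *
        (min 1 (α / a0 fA * (2 - α / a0 fA * supnorm fA))) :=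
      mul_pos (mul_pos (by linarith) (by norm_num)) hc2'
    have qD : ∀ᶠ θ in 𝓝[≠] (0:ℝ), ‖pC (0:ℝ)‖^2/2 * (1/2) *
        (min 1 (α / a0 fA * (2 - α / a0 fA * supnorm fA))) * (fC (θ/2) + ‖fB (θ/2)‖^2)
        ≤ Dfun θ := by
      filter_upwards [q5, q6] with θ h5 h6
      have hlb := hChat_lb (θ/2)
      have hd1 : fC' θ ≤ Dfun θ := hDge θ
      have hfc' := hfC' θ
      have h2nn : 0 ≤ ‖pC (θ/2 + Real.pi)‖^2 * fChat (θ/2 + Real.pi) :=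
        mul_nonneg (sq_nonneg _) (hfChat_nn _)
      have hcs : ‖pC (0:ℝ)‖^2/2 * fChat (θ/2) ≤ ‖pC (θ/2)‖^2 * fChat (θ/2) :=
        mul_le_mul_of_nonneg_right h6.le (hfChat_nn _)
      nlinarith [mul_le_mul_of_nonneg_left hlb (by linarith : (0:ℝ) ≤ ‖pC (0:ℝ)‖^2/2)]
    have qG : ∀ᶠ θ in 𝓝[≠] (0:ℝ), fC θ + ‖fB θ‖^2 ≤
        2^(k'+2) * (fC (θ/2) + ‖fB (θ/2)‖^2) := by
      filter_upwards [q1, q2, q3, q4, q5] with θ e1 e2 e3 e4 e5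
      have hg2 : 0 < g (θ/2) := by linarith
      rw [e2] at e5
      have hP : 0 < (θ/2)^k' := by nlinarith
      have hpow : (2:ℝ)^k' * (θ/2)^k' = θ^k' := by
        rw [← mul_pow, show (2:ℝ)*(θ/2) = θ by ring]
      have hθknn : 0 ≤ θ^k' := by
        rw [← hpow]
        positivity
      calc fC θ + ‖fB θ‖^2 = θ^k' * g θ := e1
        _ ≤ θ^k' * (4 * g (θ/2)) := mul_le_mul_of_nonneg_left (by linarith) hθknn
        _ = 2^(k'+2) * ((θ/2)^k' * g (θ/2)) := by rw [pow_add, ← hpow]; ring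
        _ = 2^(k'+2) * (fC (θ/2) + ‖fB (θ/2)‖^2) := by rw [← e2]
    refine ⟨(1 + α / a0 fA * 2) * 2^(k'+2) / (‖pC (0:ℝ)‖^2/2 * (1/2) *
      (min 1 (α / a0 fA * (2 - α / a0 fA * supnorm fA)))), ?_⟩
    rw [Filter.eventually_map]
    filter_upwards [qD, qG, q5] with θ hdθ hgθ h5
    have hDpos : 0 < Dfun θ := lt_of_lt_of_le (mul_pos hc3 h5) hdθ
    rw [div_le_iff₀ hDpos]
    have t3 : fC (θ/2) + ‖fB (θ/2)‖^2 ≤ Dfun θ / (‖pC (0:ℝ)‖^2/2 * (1/2) *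
        (min 1 (α / a0 fA * (2 - α / a0 fA * supnorm fA)))) :=
      (le_div_iff₀ hc3).mpr (by linarith)
    calc fChat θ ≤ (1 + α / a0 fA * 2) * (fC θ + ‖fB θ‖^2) := hC1 θ
      _ ≤ (1 + α / a0 fA * 2) * (2^(k'+2) * (fC (θ/2) + ‖fB (θ/2)‖^2)) :=
          mul_le_mul_of_nonneg_left hgθ hC1nn
      _ ≤ (1 + α / a0 fA * 2) * (2^(k'+2) * (Dfun θ / (‖pC (0:ℝ)‖^2/2 * (1/2) *
          (min 1 (α / a0 fA * (2 - α / a0 fA * supnorm fA)))))) :=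
          mul_le_mul_of_nonneg_left (mul_le_mul_of_nonneg_left t3 (by positivity)) hC1nn
      _ = (1 + α / a0 fA * 2) * 2^(k'+2) / (‖pC (0:ℝ)‖^2/2 * (1/2) *
          (min 1 (α / a0 fA * (2 - α / a0 fA * supnorm fA)))) * Dfun θ := by
          field_simp
end
end
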